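/- Proposition (Inverse Euler equations). Let v^E be a maximizer of Problem IV (for fixed initial type δ₁) and let v^B be a maximizer of the efficient problem. Suppose both are interior: every utility value lies in the interior of the domain of φ. Then for every t ∈ {2,…,T−1} and every history H ∈ Δ^{t−2}: E_F[φ'(v^E_{t+1}(H,δ̃_t,δ̃_{t+1}))] = R·(Σ_n q_n δ^(n))·E_F[φ'(v^E_t(H,δ̃_t))], and E_F[φ'(v^B_{t+1}(δ₁,H,δ̃_t,δ̃_{t+1}))] = R·(Σ_n p_n δ^(n))·E_F[φ'(v^B_t(δ₁,H,δ̃_t))], where the expectations E_F are over independent draws δ̃_t, δ̃_{t+1} with weights p. Moreover, E_F[φ'(v^E_2(δ̃₂))] = R·δ₁·φ'(v^E_1) and E_F[φ'(v^B_2(δ₁,δ̃₂))] = R·δ₁·φ'(v^B_1(δ₁)). -/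

import Mathlib

/-- A policy for Problem IV with horizon `T` and `N` types, for a fixed initial type.
Paths `ω : Fin (T-2) → Fin N` record the type draws at dates `2,…,T-1` (coordinate `s`
is the draw at date `s+2`).  `v t ω` is the date-`t` utility; `adapted` says that for
`t ≤ T-1` it depends only on the draws at dates `2,…,t` (so `v 1` is constant and
`v T` depends on the draws at dates `2,…,T-1`). -/
structure PolicyIV (T N : ℕ) where
  v : ℕ → (Fin (T - 2) → Fin N) → ℝ
  adapted : ∀ t : ℕ, t ≤ T - 1 → ∀ ω ω' : Fin (T - 2) → Fin N,
    (∀ s : Fin (T - 2), (s : ℕ) + 2 ≤ t → ω s = ω' s) → v t ω = v t ω'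

/-- Splice two paths: keep the draws of `ω` at dates `≤ t` and of `ω'` at dates `> t`. -/
def splice (T N : ℕ) (t : ℕ) (ω ω' : Fin (T - 2) → Fin N) : Fin (T - 2) → Fin N :=
  fun s => if (s : ℕ) + 2 ≤ t then ω s else ω' s

/-- Expectation over paths with i.i.d. coordinate weights `r`. -/
noncomputable def Epath (T N : ℕ) (r : Fin N → ℝ) (f : (Fin (T - 2) → Fin N) → ℝ) : ℝ :=
  ∑ ω : Fin (T - 2) → Fin N, (∏ s, r (ω s)) * f ω

/-- Discounting of date-`t` utility from date 2: `Π_{s=2}^{t-1} δ̃_s`. -/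
noncomputable def discIV (T N : ℕ) (δ : Fin N → ℝ) (t : ℕ) (ω : Fin (T - 2) → Fin N) : ℝ :=
  ∏ s : Fin (T - 2), if (s : ℕ) + 2 < t then δ (ω s) else 1

/-- Discounting of date-`τ` utility from date `t+1`: `Π_{s=t+1}^{τ-1} δ̃_s`. -/
noncomputable def discCont (T N : ℕ) (δ : Fin N → ℝ) (t τ : ℕ) (ω : Fin (T - 2) → Fin N) : ℝ :=
  ∏ s : Fin (T - 2), if t + 1 ≤ (s : ℕ) + 2 ∧ (s : ℕ) + 2 < τ then δ (ω s) else 1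

/-- The discount factor realised at date `t` along the path `ω` (for `2 ≤ t ≤ T-1`). -/
noncomputable def deltaAt (T N : ℕ) (δ : Fin N → ℝ) (t : ℕ) (ω : Fin (T - 2) → Fin N) : ℝ :=
  ∏ s : Fin (T - 2), if (s : ℕ) + 2 = t then δ (ω s) else 1

/-- The agent's expected discounted continuation utility from date `t+1` onwards,
after the history and report recorded in `ω` up to date `t`, with agent beliefs `q`:
`E_A[Σ_{τ=t+1}^T (Π_{s=t+1}^{τ-1} δ̃_s) v_τ]`. -/
noncomputable def contA (T N : ℕ) (δ q : Fin N → ℝ)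
    (v : ℕ → (Fin (T - 2) → Fin N) → ℝ) (t : ℕ) (ω : Fin (T - 2) → Fin N) : ℝ :=
  Epath T N q (fun ω' => ∑ τ ∈ Finset.Icc (t + 1) T,
    discCont T N δ t τ (splice T N t ω ω') * v τ (splice T N t ω ω'))

/-- The agent's expected payoff: `v₁ + δ₁·E_A[Σ_{t=2}^T (Π_{s=2}^{t-1} δ̃_s) v_t]`. -/
noncomputable def payoffIV (T N : ℕ) (δ q : Fin N → ℝ) (δ1 : ℝ) (P : PolicyIV T N) : ℝ :=
  Epath T N q (fun ω => P.v 1 ω + δ1 * ∑ t ∈ Finset.Icc 2 T, discIV T N δ t ω * P.v t ω)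

/-- The firm's expected discounted cost: `φ(v₁) + E_F[Σ_{t=2}^T φ(v_t)/R^(t-1)]`. -/
noncomputable def costIV (T N : ℕ) (p : Fin N → ℝ) (φ : ℝ → ℝ) (R : ℝ) (P : PolicyIV T N) : ℝ :=
  Epath T N p (fun ω => φ (P.v 1 ω) + ∑ t ∈ Finset.Icc 2 T, φ (P.v t ω) / R ^ (t - 1))

/-- All incentive constraints `IC(t,H,δ,δ̂)`: at every date `t ∈ {2,…,T-1}` and after
any history (the common prefix of `ω` and `ω'`), the agent with true date-`t` type
(the date-`t` coordinate of `ω`) prefers its own report to any other report (the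
date-`t` coordinate of `ω'`). -/
def ICIV (T N : ℕ) (δ q : Fin N → ℝ) (P : PolicyIV T N) : Prop :=
  ∀ t : ℕ, 2 ≤ t → t ≤ T - 1 → ∀ ω ω' : Fin (T - 2) → Fin N,
    (∀ s : Fin (T - 2), (s : ℕ) + 2 < t → ω s = ω' s) →
    P.v t ω' + deltaAt T N δ t ω * contA T N δ q P.v t ω' ≤
      P.v t ω + deltaAt T N δ t ω * contA T N δ q P.v t ω

/-- Feasibility for Problem IV: utilities bounded below by `m = u 0`, the firm
break-even condition, and all incentive constraints. -/
def FeasIV (T N : ℕ) (δ p q : Fin N → ℝ) (φ : ℝ → ℝ) (R I m : ℝ) (P : PolicyIV T N) : Prop :=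
  (∀ t ∈ Finset.Icc 1 T, ∀ ω, m ≤ P.v t ω) ∧
  costIV T N p φ R P ≤ I ∧ ICIV T N δ q P

/-- Feasibility for Problem IV with utilities in the domain `D` of `φ`. -/
def FeasIVD (T N : ℕ) (δ p q : Fin N → ℝ) (φ : ℝ → ℝ) (R I : ℝ) (D : Set ℝ)
    (P : PolicyIV T N) : Prop :=
  (∀ t ∈ Finset.Icc 1 T, ∀ ω, P.v t ω ∈ D) ∧
  costIV T N p φ R P ≤ I ∧ ICIV T N δ q P

/-- A policy for the efficient problem: paths `ω : Fin (T-1) → Fin N` record the type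
draws at dates `1,…,T-1` (coordinate `s` is the draw at date `s+1`); `v t` depends
only on the draws at dates `1,…,t` for `t ≤ T-1`. -/
structure PolicyB (T N : ℕ) where
  v : ℕ → (Fin (T - 1) → Fin N) → ℝ
  adapted : ∀ t : ℕ, t ≤ T - 1 → ∀ ω ω' : Fin (T - 1) → Fin N,
    (∀ s : Fin (T - 1), (s : ℕ) < t → ω s = ω' s) → v t ω = v t ω'

/-- Expectation over efficient-problem paths with i.i.d. coordinate weights `p`. -/
noncomputable def EpathB (T N : ℕ) (p : Fin N → ℝ) (f : (Fin (T - 1) → Fin N) → ℝ) : ℝ :=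
  ∑ ω : Fin (T - 1) → Fin N, (∏ s, p (ω s)) * f ω

/-- Discounting of date-`t` utility in the efficient problem: `Π_{s=1}^{t-1} δ̃_s`. -/
noncomputable def discBpol (T N : ℕ) (δ : Fin N → ℝ) (t : ℕ) (ω : Fin (T - 1) → Fin N) : ℝ :=
  ∏ s : Fin (T - 1), if (s : ℕ) + 1 < t then δ (ω s) else 1

/-- Splice two efficient-problem paths: keep the draws of `ω` at dates `< t` and
fresh draws `ω'` at dates `≥ t`. -/
def spliceB (T N : ℕ) (t : ℕ) (ω ω' : Fin (T - 1) → Fin N) : Fin (T - 1) → Fin N :=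
  fun s => if (s : ℕ) + 1 < t then ω s else ω' s

/-- Objective of the efficient problem. -/
noncomputable def objBpol (T N : ℕ) (δ p : Fin N → ℝ) (P : PolicyB T N) : ℝ :=
  EpathB T N p (fun ω => ∑ t ∈ Finset.Icc 1 T, discBpol T N δ t ω * P.v t ω)

/-- Cost of the efficient problem. -/
noncomputable def costBpol (T N : ℕ) (p : Fin N → ℝ) (φ : ℝ → ℝ) (R : ℝ) (P : PolicyB T N) : ℝ :=
  EpathB T N p (fun ω => ∑ t ∈ Finset.Icc 1 T, φ (P.v t ω) / R ^ (t - 1))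

/-- Feasibility for the efficient problem with utilities in the domain `D`. -/
def FeasBD (T N : ℕ) (p : Fin N → ℝ) (φ : ℝ → ℝ) (R I : ℝ) (D : Set ℝ)
    (P : PolicyB T N) : Prop :=
  (∀ t ∈ Finset.Icc 1 T, ∀ ω, P.v t ω ∈ D) ∧ costBpol T N p φ R P ≤ I


open Finset

noncomputable def wsum (k N : ℕ) (r : Fin N → ℝ) (f : (Fin k → Fin N) → ℝ) : ℝ :=
  ∑ ω : Fin k → Fin N, (∏ s, r (ω s)) * f ω

lemma wsum_congr {k N : ℕ} {r : Fin N → ℝ} {f g : (Fin k → Fin N) → ℝ}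
    (h : ∀ ω, f ω = g ω) : wsum k N r f = wsum k N r g := by
  unfold wsum; exact Finset.sum_congr rfl fun ω _ => by rw [h]

lemma wsum_add {k N : ℕ} (r : Fin N → ℝ) (f g : (Fin k → Fin N) → ℝ) :
    wsum k N r (fun ω => f ω + g ω) = wsum k N r f + wsum k N r g := by
  unfold wsum; rw [← Finset.sum_add_distrib]
  exact Finset.sum_congr rfl fun ω _ => by ring

lemma wsum_mul {k N : ℕ} (r : Fin N → ℝ) (c : ℝ) (f : (Fin k → Fin N) → ℝ) :
    wsum k N r (fun ω => c * f ω) = c * wsum k N r f := by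
  unfold wsum; rw [Finset.mul_sum]
  exact Finset.sum_congr rfl fun ω _ => by ring

lemma sumPi {k N : ℕ} (f : Fin k → Fin N → ℝ) :
    ∑ ω : Fin k → Fin N, ∏ s, f s (ω s) = ∏ s, ∑ n, f s n := by
  rw [Finset.prod_univ_sum]
  rw [← Fintype.piFinset_univ]

lemma prodsum {k N : ℕ} {r : Fin N → ℝ} (hr : ∑ n, r n = 1) :
    ∑ ω : Fin k → Fin N, ∏ s, r (ω s) = 1 := by
  rw [sumPi (fun _ n => r n)]
  simp [hr]

lemma wsum_const {k N : ℕ} {r : Fin N → ℝ} (hr : ∑ n, r n = 1) (c : ℝ) :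
    wsum k N r (fun _ => c) = c := by
  unfold wsum; rw [← Finset.sum_mul, prodsum hr, one_mul]

lemma wsum_marginal {k N : ℕ} {r : Fin N → ℝ} (hr : ∑ n, r n = 1)
    (s0 : Fin k) (g : Fin N → ℝ) :
    wsum k N r (fun ω => g (ω s0)) = ∑ n, r n * g n := by
  unfold wsum
  have h1 : ∀ ω : Fin k → Fin N,
      (∏ s, r (ω s)) * g (ω s0) = ∏ s, (if s = s0 then r (ω s) * g (ω s) else r (ω s)) := by
    intro ω
    have : ∀ s : Fin k, (if s = s0 then r (ω s) * g (ω s) else r (ω s))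
        = r (ω s) * (if s = s0 then g (ω s) else 1) := by
      intro s; split_ifs <;> ring
    rw [Finset.prod_congr rfl fun s _ => this s, Finset.prod_mul_distrib,
      Finset.prod_ite_eq' Finset.univ s0 (fun s => g (ω s))]
    simp
  rw [Finset.sum_congr rfl fun ω _ => h1 ω,
    sumPi (fun s n => if s = s0 then r n * g n else r n)]
  have h2 : ∀ s : Fin k, (∑ n, if s = s0 then r n * g n else r n)
      = if s = s0 then ∑ n, r n * g n else 1 := by
    intro s; split_ifs <;> simp [hr]
  rw [Finset.prod_congr rfl fun s _ => h2 s, Finset.prod_ite_eq' Finset.univ s0]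
  simp


lemma wsum_factor_core {k N : ℕ} {r : Fin N → ℝ}
    (S : Fin k → Prop) [DecidablePred S] (A B : (Fin k → Fin N) → ℝ)
    (hA : ∀ ω ω', (∀ s, S s → ω s = ω' s) → A ω = A ω')
    (hB : ∀ ω ω', (∀ s, ¬ S s → ω s = ω' s) → B ω = B ω') :
    (∑ ω : Fin k → Fin N, (∏ s, r (ω s)) * (A ω * B ω)) * (∑ ω : Fin k → Fin N, ∏ s, r (ω s))
      = (∑ ω : Fin k → Fin N, (∏ s, r (ω s)) * A ω) * (∑ ω : Fin k → Fin N, (∏ s, r (ω s)) * B ω) := by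
  classical
  let e : ((Fin k → Fin N) × (Fin k → Fin N)) → ((Fin k → Fin N) × (Fin k → Fin N)) :=
    fun x => (fun s => if S s then x.1 s else x.2 s, fun s => if S s then x.2 s else x.1 s)
  have he : Function.Involutive e := by
    intro x
    apply Prod.ext
    · funext s
      show (if S s then (if S s then x.1 s else x.2 s) else (if S s then x.2 s else x.1 s)) = x.1 s
      split_ifs with h <;> simp [h]
    · funext s
      show (if S s then (if S s then x.2 s else x.1 s) else (if S s then x.1 s else x.2 s)) = x.2 s
      split_ifs with h <;> simp [h]
  let G : ((Fin k → Fin N) × (Fin k → Fin N)) → ℝ :=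
    fun x => ((∏ s, r (x.1 s)) * (A x.1 * B x.1)) * ∏ s, r (x.2 s)
  have key : ∀ x, ((∏ s, r (x.1 s)) * A x.1) * ((∏ s, r (x.2 s)) * B x.2) = G (e x) := by
    intro x
    have hw : (∏ s, r ((e x).1 s)) * (∏ s, r ((e x).2 s))
        = (∏ s, r (x.1 s)) * (∏ s, r (x.2 s)) := by
      rw [← Finset.prod_mul_distrib, ← Finset.prod_mul_distrib]
      apply Finset.prod_congr rfl
      intro s _
      show r (if S s then x.1 s else x.2 s) * r (if S s then x.2 s else x.1 s) = _
      split_ifs with h <;> ring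
    have hAx : A ((e x).1) = A x.1 := by
      apply hA; intro s hs
      show (if S s then x.1 s else x.2 s) = x.1 s
      rw [if_pos hs]
    have hBx : B ((e x).1) = B x.2 := by
      apply hB; intro s hs
      show (if S s then x.1 s else x.2 s) = x.2 s
      rw [if_neg hs]
    show _ = ((∏ s, r ((e x).1 s)) * (A ((e x).1) * B ((e x).1))) * ∏ s, r ((e x).2 s)
    rw [hAx, hBx]
    calc ((∏ s, r (x.1 s)) * A x.1) * ((∏ s, r (x.2 s)) * B x.2)
        = ((∏ s, r (x.1 s)) * (∏ s, r (x.2 s))) * (A x.1 * B x.2) := by ring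
      _ = ((∏ s, r ((e x).1 s)) * (∏ s, r ((e x).2 s))) * (A x.1 * B x.2) := by rw [hw]
      _ = _ := by ring
  calc (∑ ω : Fin k → Fin N, (∏ s, r (ω s)) * (A ω * B ω)) * (∑ ω : Fin k → Fin N, ∏ s, r (ω s))
      = ∑ x : (Fin k → Fin N) × (Fin k → Fin N), G x := by
        rw [Fintype.sum_prod_type (f := G), Finset.sum_mul_sum]
    _ = ∑ x, G (e x) := (Function.Bijective.sum_comp he.bijective G).symm
    _ = ∑ x : (Fin k → Fin N) × (Fin k → Fin N),
          ((∏ s, r (x.1 s)) * A x.1) * ((∏ s, r (x.2 s)) * B x.2) := by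
        exact Finset.sum_congr rfl fun x _ => (key x).symm
    _ = _ := by
        rw [Fintype.sum_prod_type
          (f := fun x : (Fin k → Fin N) × (Fin k → Fin N) =>
            ((∏ s, r (x.1 s)) * A x.1) * ((∏ s, r (x.2 s)) * B x.2)), Finset.sum_mul_sum]

lemma wsum_factor {k N : ℕ} {r : Fin N → ℝ} (hr : ∑ n, r n = 1)
    (S : Fin k → Prop) [DecidablePred S] (A B : (Fin k → Fin N) → ℝ)
    (hA : ∀ ω ω', (∀ s, S s → ω s = ω' s) → A ω = A ω')
    (hB : ∀ ω ω', (∀ s, ¬ S s → ω s = ω' s) → B ω = B ω') :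
    wsum k N r (fun ω => A ω * B ω) = wsum k N r A * wsum k N r B := by
  have := wsum_factor_core (r := r) S A B hA hB
  rw [prodsum hr, mul_one] at this
  exact this

lemma sum_two' (s : Finset ℕ) (a b : ℕ) (hab : a ≠ b) (f : ℕ → ℝ) (ca cb : ℝ) :
    ∑ t ∈ s, f t * (if t = a then ca else if t = b then cb else 0)
      = (if a ∈ s then f a * ca else 0) + (if b ∈ s then f b * cb else 0) := by
  have h : ∀ t ∈ s, f t * (if t = a then ca else if t = b then cb else 0)
      = (if t = a then f t * ca else 0) + (if t = b then f t * cb else 0) := by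
    intro t _
    rcases eq_or_ne t a with rfl | hta
    · rw [if_pos rfl, if_pos rfl, if_neg hab]; ring
    · rw [if_neg hta, if_neg hta]
      rcases eq_or_ne t b with rfl | htb
      · simp
      · simp [htb]
  rw [Finset.sum_congr rfl h, Finset.sum_add_distrib,
    Finset.sum_ite_eq' s a (fun t => f t * ca), Finset.sum_ite_eq' s b (fun t => f t * cb)]
open Filter Topology

lemma foc_generic (D : Set ℝ) (φ φ' : ℝ → ℝ)
    (hφder : ∀ x ∈ interior D, HasDerivAt φ (φ' x) x)
    {ι : Type*} [Fintype ι] (w a b : ι → ℝ) (ha : ∀ i, a i ∈ interior D)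
    (hmin : ∀ ε : ℝ, (∀ i, a i + ε * b i ∈ interior D) →
      ∑ i, w i * φ (a i) ≤ ∑ i, w i * φ (a i + ε * b i)) :
    ∑ i, w i * (φ' (a i) * b i) = 0 := by
  set C : ℝ → ℝ := fun ε => ∑ i, w i * φ (a i + ε * b i) with hCdef
  have hC : HasDerivAt C (∑ i, w i * (φ' (a i) * b i)) 0 := by
    apply HasDerivAt.fun_sum
    intro i _
    have h1 : HasDerivAt (fun ε : ℝ => a i + ε * b i) (b i) 0 := by
      simpa using ((hasDerivAt_id (0:ℝ)).mul_const (b i)).const_add (a i)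
    have hφ : HasDerivAt φ (φ' (a i)) ((fun ε : ℝ => a i + ε * b i) 0) := by
      have : a i + (0:ℝ) * b i = a i := by ring
      simpa [this] using hφder (a i) (ha i)
    have h2 : HasDerivAt (fun ε : ℝ => φ (a i + ε * b i)) (φ' (a i) * b i) 0 := by
      exact hφ.comp 0 h1
    exact h2.const_mul (w i)
  have hU : ∀ᶠ ε in 𝓝 (0:ℝ), ∀ i, a i + ε * b i ∈ interior D := by
    rw [Filter.eventually_all]
    intro i
    have hc : ContinuousAt (fun ε : ℝ => a i + ε * b i) 0 :=
      (continuous_const.add (continuous_id.mul continuous_const)).continuousAt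
    have := hc.eventually_mem (isOpen_interior.mem_nhds (by simpa using ha i))
    simpa using this
  have hloc : IsLocalMin C 0 := by
    apply hU.mono
    intro ε hε
    have := hmin ε hε
    simpa [hCdef] using this
  exact hloc.hasDerivAt_eq_zero hC

open Filter Topology in
lemma exists_pos_of_eventually {P : ℝ → Prop} (h : ∀ᶠ η in 𝓝 (0:ℝ), P η) :
    ∃ η : ℝ, 0 < η ∧ P η := by
  have h2 : ∀ᶠ η in 𝓝[>] (0:ℝ), P η := h.filter_mono nhdsWithin_le_nhds
  have h3 : ∀ᶠ η in 𝓝[>] (0:ℝ), η ∈ Set.Ioi (0:ℝ) := eventually_mem_nhdsWithin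
  obtain ⟨η, hP, hη⟩ := (h2.and h3).exists
  exact ⟨η, hη, hP⟩

lemma Epath_eq_wsum (T N : ℕ) (r : Fin N → ℝ) (f : (Fin (T-2) → Fin N) → ℝ) :
    Epath T N r f = wsum (T-2) N r f := rfl

lemma contA_congr (T N : ℕ) (δ q : Fin N → ℝ) (v v' : ℕ → (Fin (T-2) → Fin N) → ℝ)
    (t : ℕ) (α : Fin (T-2) → Fin N)
    (h : ∀ τ, t + 1 ≤ τ → ∀ ω, v τ ω = v' τ ω) :
    contA T N δ q v t α = contA T N δ q v' t α := by
  unfold contA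
  apply congrArg
  funext ω'
  apply Finset.sum_congr rfl
  intro τ hτ
  rw [h τ (Finset.mem_Icc.mp hτ).1]

lemma contA_add (T N : ℕ) (δ q : Fin N → ℝ) (v d : ℕ → (Fin (T-2) → Fin N) → ℝ)
    (ε : ℝ) (t : ℕ) (α : Fin (T-2) → Fin N) :
    contA T N δ q (fun τ ω => v τ ω + ε * d τ ω) t α
      = contA T N δ q v t α + ε * contA T N δ q d t α := by
  unfold contA
  rw [Epath_eq_wsum, Epath_eq_wsum, Epath_eq_wsum, ← wsum_mul, ← wsum_add]
  apply wsum_congr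
  intro ω'
  rw [Finset.mul_sum, ← Finset.sum_add_distrib]
  apply Finset.sum_congr rfl
  intro τ _
  ring

lemma Icc_one_eq_insert (T : ℕ) (hT : 1 ≤ T) :
    Finset.Icc 1 T = insert 1 (Finset.Icc 2 T) := by
  ext x
  simp only [Finset.mem_Icc, Finset.mem_insert]
  omega

lemma costIV_sum (T N : ℕ) (hT : 1 ≤ T) (p : Fin N → ℝ) (φ : ℝ → ℝ) (R : ℝ)
    (P : PolicyIV T N) :
    costIV T N p φ R P
      = ∑ t ∈ Finset.Icc 1 T, ∑ ω : Fin (T-2) → Fin N,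
          (∏ s, p (ω s)) * (φ (P.v t ω) / R ^ (t - 1)) := by
  rw [Icc_one_eq_insert T hT, Finset.sum_insert (by simp)]
  unfold costIV Epath
  have h1 : ∀ ω : Fin (T-2) → Fin N,
      (∏ s, p (ω s)) * (φ (P.v 1 ω) + ∑ t ∈ Finset.Icc 2 T, φ (P.v t ω) / R ^ (t - 1))
      = (∏ s, p (ω s)) * (φ (P.v 1 ω) / R ^ (1 - 1))
        + ∑ t ∈ Finset.Icc 2 T, (∏ s, p (ω s)) * (φ (P.v t ω) / R ^ (t - 1)) := by
    intro ω
    rw [mul_add, Finset.mul_sum]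
    norm_num
  rw [Finset.sum_congr rfl fun ω _ => h1 ω, Finset.sum_add_distrib, Finset.sum_comm]

open Filter Topology in
lemma noSlackIV (T N : ℕ) (hT : 3 ≤ T) (δ p q : Fin N → ℝ) (hq1 : ∑ n, q n = 1)
    (φ : ℝ → ℝ) (R I : ℝ) (D : Set ℝ)
    (hφc : ∀ x ∈ interior D, ContinuousAt φ x)
    (δ1 : ℝ) (vE : PolicyIV T N)
    (hEcost : costIV T N p φ R vE ≤ I)
    (hEmax : ∀ Q : PolicyIV T N, FeasIVD T N δ p q φ R I D Q →
      payoffIV T N δ q δ1 Q ≤ payoffIV T N δ q δ1 vE)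
    (Q : PolicyIV T N) (hdom : ∀ t ∈ Finset.Icc 1 T, ∀ ω, Q.v t ω ∈ interior D)
    (hIC : ICIV T N δ q Q) (hpay : payoffIV T N δ q δ1 Q = payoffIV T N δ q δ1 vE) :
    costIV T N p φ R vE ≤ costIV T N p φ R Q := by
  by_contra hlt
  push_neg at hlt
  have hQI : costIV T N p φ R Q < I := lt_of_lt_of_le hlt hEcost
  have h1T : 1 ∈ Finset.Icc 1 T := by simp [Finset.mem_Icc]; omega
  -- the bumped policy
  let Q' : ℝ → PolicyIV T N := fun η =>
    ⟨fun t ω => Q.v t ω + (if t = 1 then η else 0),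
     fun t ht ω ω' h => by rw [Q.adapted t ht ω ω' h]⟩
  have hv : ∀ η t ω, (Q' η).v t ω = Q.v t ω + (if t = 1 then η else 0) := fun _ _ _ => rfl
  -- cost of bumped policy
  have hcost' : ∀ η, costIV T N p φ R (Q' η)
      = costIV T N p φ R Q
        + ∑ ω : Fin (T-2) → Fin N, (∏ s, p (ω s)) * (φ (Q.v 1 ω + η) - φ (Q.v 1 ω)) := by
    intro η
    unfold costIV Epath
    rw [← Finset.sum_add_distrib]
    apply Finset.sum_congr rfl
    intro ω _
    have hvt : ∀ t ∈ Finset.Icc 2 T,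
        φ ((Q' η).v t ω) / R ^ (t-1) = φ (Q.v t ω) / R ^ (t-1) := by
      intro t ht
      have h1 : t ≠ 1 := by have := Finset.mem_Icc.mp ht; omega
      rw [hv, if_neg h1, add_zero]
    dsimp only
    rw [Finset.sum_congr rfl hvt, hv, if_pos rfl]
    ring
  -- continuity of the correction term in η
  have htend : Tendsto (fun η => costIV T N p φ R (Q' η)) (𝓝 0) (𝓝 (costIV T N p φ R Q)) := by
    have hsum : Tendsto (fun η => ∑ ω : Fin (T-2) → Fin N,
        (∏ s, p (ω s)) * (φ (Q.v 1 ω + η) - φ (Q.v 1 ω))) (𝓝 0) (𝓝 0) := by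
      have h0 : Tendsto (fun η : ℝ => η) (𝓝 0) (𝓝 0) := tendsto_id
      have : ∀ ω : Fin (T-2) → Fin N, Tendsto
          (fun η => (∏ s, p (ω s)) * (φ (Q.v 1 ω + η) - φ (Q.v 1 ω))) (𝓝 0) (𝓝 0) := by
        intro ω
        have harg : Tendsto (fun η : ℝ => Q.v 1 ω + η) (𝓝 0) (𝓝 (Q.v 1 ω)) := by
          simpa using (continuous_add_left (Q.v 1 ω)).tendsto (0:ℝ)
        have hφt : Tendsto (fun η : ℝ => φ (Q.v 1 ω + η)) (𝓝 0) (𝓝 (φ (Q.v 1 ω))) :=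
          (hφc _ (hdom 1 h1T ω)).tendsto.comp harg
        have := (hφt.sub_const (φ (Q.v 1 ω))).const_mul ((∏ s, p (ω s)))
        simpa using this
      have := tendsto_finset_sum Finset.univ (fun ω _ => this ω)
      simpa using this
    have := (tendsto_const_nhds (x := costIV T N p φ R Q) (f := 𝓝 (0:ℝ))).add hsum
    rw [add_zero] at this
    exact this.congr fun η => (hcost' η).symm
  -- eventually feasible and cheap
  have hev1 : ∀ᶠ η in 𝓝 (0:ℝ), costIV T N p φ R (Q' η) ≤ I :=
    (htend.eventually_lt_const hQI).mono fun η h => le_of_lt h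
  have hev2 : ∀ᶠ η in 𝓝 (0:ℝ), ∀ ω : Fin (T-2) → Fin N, Q.v 1 ω + η ∈ interior D := by
    rw [Filter.eventually_all]
    intro ω
    have hc : ContinuousAt (fun η : ℝ => Q.v 1 ω + η) 0 :=
      (continuous_const.add continuous_id).continuousAt
    have := hc.eventually_mem (isOpen_interior.mem_nhds (by simpa using hdom 1 h1T ω))
    simpa using this
  obtain ⟨η, hηpos, hcostI, hdom1⟩ :
      ∃ η : ℝ, 0 < η ∧ costIV T N p φ R (Q' η) ≤ I ∧
        ∀ ω : Fin (T-2) → Fin N, Q.v 1 ω + η ∈ interior D := by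
    obtain ⟨η, h1, h2⟩ := exists_pos_of_eventually (hev1.and hev2)
    exact ⟨η, h1, h2.1, h2.2⟩
  -- feasibility of Q' η
  have hfeas : FeasIVD T N δ p q φ R I D (Q' η) := by
    refine ⟨?_, hcostI, ?_⟩
    · intro t ht ω
      rcases eq_or_ne t 1 with rfl | hne
      · rw [hv, if_pos rfl]
        exact interior_subset (hdom1 ω)
      · rw [hv, if_neg hne, add_zero]
        exact interior_subset (hdom t ht ω)
    · intro t h2 hT1 ω ω' hag
      have hveq : ∀ α, (Q' η).v t α = Q.v t α := by
        intro α
        have h1 : t ≠ 1 := by omega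
        rw [hv, if_neg h1, add_zero]
      have hcA : ∀ α, contA T N δ q (Q' η).v t α = contA T N δ q Q.v t α := by
        intro α
        apply contA_congr
        intro τ hτ ω''
        have h1 : τ ≠ 1 := by omega
        rw [hv, if_neg h1, add_zero]
      rw [hveq, hveq, hcA, hcA]
      exact hIC t h2 hT1 ω ω' hag
  -- payoff of Q' η
  have hpay' : payoffIV T N δ q δ1 (Q' η) = payoffIV T N δ q δ1 Q + η := by
    have hstep : payoffIV T N δ q δ1 Q + η
        = wsum (T-2) N q (fun ω =>
            (Q.v 1 ω + δ1 * ∑ t ∈ Finset.Icc 2 T, discIV T N δ t ω * Q.v t ω) + η) := by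
      rw [wsum_add, wsum_const (r := q) hq1]
      rfl
    rw [hstep]
    unfold payoffIV
    rw [Epath_eq_wsum]
    apply wsum_congr
    intro ω
    have hvt : ∀ t ∈ Finset.Icc 2 T,
        discIV T N δ t ω * (Q' η).v t ω = discIV T N δ t ω * Q.v t ω := by
      intro t ht
      have h1 : t ≠ 1 := by have := Finset.mem_Icc.mp ht; omega
      rw [hv, if_neg h1, add_zero]
    rw [Finset.sum_congr rfl hvt, hv, if_pos rfl]
    ring
  have := hEmax (Q' η) hfeas
  rw [hpay', hpay] at this
  linarith

/-- First-order condition for Problem IV along a feasible perturbation direction `d`. -/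
lemma focIV (T N : ℕ) (hT : 3 ≤ T) (δ p q : Fin N → ℝ) (hq1 : ∑ n, q n = 1)
    (φ φ' : ℝ → ℝ) (R I : ℝ) (D : Set ℝ)
    (hφder : ∀ x ∈ interior D, HasDerivAt φ (φ' x) x)
    (δ1 : ℝ) (vE : PolicyIV T N)
    (hEfeas : FeasIVD T N δ p q φ R I D vE)
    (hEmax : ∀ Q : PolicyIV T N, FeasIVD T N δ p q φ R I D Q →
      payoffIV T N δ q δ1 Q ≤ payoffIV T N δ q δ1 vE)
    (hEint : ∀ t ∈ Finset.Icc 1 T, ∀ ω, vE.v t ω ∈ interior D)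
    (d : ℕ → (Fin (T-2) → Fin N) → ℝ)
    (hdad : ∀ t : ℕ, t ≤ T - 1 → ∀ ω ω' : Fin (T-2) → Fin N,
      (∀ s : Fin (T-2), (s : ℕ) + 2 ≤ t → ω s = ω' s) → d t ω = d t ω')
    (hpay0 : wsum (T-2) N q (fun ω =>
      d 1 ω + δ1 * ∑ t ∈ Finset.Icc 2 T, discIV T N δ t ω * d t ω) = 0)
    (hICd : ∀ t : ℕ, 2 ≤ t → t ≤ T - 1 → ∀ ω ω' : Fin (T-2) → Fin N,
      (∀ s : Fin (T-2), (s : ℕ) + 2 < t → ω s = ω' s) →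
      d t ω = d t ω' ∧ contA T N δ q d t ω = contA T N δ q d t ω') :
    ∑ t ∈ Finset.Icc 1 T, (∑ ω : Fin (T-2) → Fin N,
      (∏ s, p (ω s)) * (φ' (vE.v t ω) * d t ω)) / R ^ (t - 1) = 0 := by
  -- the perturbed policies
  let Q : ℝ → PolicyIV T N := fun ε =>
    ⟨fun t ω => vE.v t ω + ε * d t ω,
     fun t ht ω ω' h => by
       rw [vE.adapted t ht ω ω' h, hdad t ht ω ω' h]⟩
  have hQv : ∀ ε t ω, (Q ε).v t ω = vE.v t ω + ε * d t ω := fun _ _ _ => rfl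
  -- payoff is preserved
  have hpay : ∀ ε, payoffIV T N δ q δ1 (Q ε) = payoffIV T N δ q δ1 vE := by
    intro ε
    unfold payoffIV
    rw [Epath_eq_wsum, Epath_eq_wsum]
    have : ∀ ω, (Q ε).v 1 ω + δ1 * ∑ t ∈ Finset.Icc 2 T, discIV T N δ t ω * (Q ε).v t ω
        = (vE.v 1 ω + δ1 * ∑ t ∈ Finset.Icc 2 T, discIV T N δ t ω * vE.v t ω)
          + ε * (d 1 ω + δ1 * ∑ t ∈ Finset.Icc 2 T, discIV T N δ t ω * d t ω) := by
      intro ω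
      rw [hQv]
      have h2 : ∀ t ∈ Finset.Icc 2 T, discIV T N δ t ω * (Q ε).v t ω
          = discIV T N δ t ω * vE.v t ω + ε * (discIV T N δ t ω * d t ω) := by
        intro t _
        rw [hQv]
        ring
      rw [Finset.sum_congr rfl h2, Finset.sum_add_distrib, ← Finset.mul_sum]
      ring
    rw [wsum_congr this, wsum_add, wsum_mul, hpay0]
    ring
  -- incentive constraints are preserved
  have hIC : ∀ ε, ICIV T N δ q (Q ε) := by
    intro ε t h2 hT1 ω ω' hag
    obtain ⟨hd1, hd2⟩ := hICd t h2 hT1 ω ω' hag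
    have hcA : ∀ α, contA T N δ q (Q ε).v t α
        = contA T N δ q vE.v t α + ε * contA T N δ q d t α := by
      intro α
      exact contA_add T N δ q vE.v d ε t α
    have hbase := hEfeas.2.2 t h2 hT1 ω ω' hag
    rw [hQv, hQv, hcA, hcA, hd1, hd2]
    have e1 : vE.v t ω' + ε * d t ω' + deltaAt T N δ t ω *
        (contA T N δ q vE.v t ω' + ε * contA T N δ q d t ω')
        = (vE.v t ω' + deltaAt T N δ t ω * contA T N δ q vE.v t ω')
          + (ε * d t ω' + deltaAt T N δ t ω * (ε * contA T N δ q d t ω')) := by ring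
    have e2 : vE.v t ω + ε * d t ω' + deltaAt T N δ t ω *
        (contA T N δ q vE.v t ω + ε * contA T N δ q d t ω')
        = (vE.v t ω + deltaAt T N δ t ω * contA T N δ q vE.v t ω)
          + (ε * d t ω' + deltaAt T N δ t ω * (ε * contA T N δ q d t ω')) := by ring
    rw [e1, e2]
    exact add_le_add hbase le_rfl
  -- apply the generic first-order condition
  have h1T : (1:ℕ) ≤ T := by omega
  let ι := {t : ℕ // t ∈ Finset.Icc 1 T} × ((Fin (T-2)) → Fin N)
  let w : ι → ℝ := fun i => (∏ s, p (i.2 s)) / R ^ ((i.1 : ℕ) - 1)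
  let a : ι → ℝ := fun i => vE.v i.1 i.2
  let b : ι → ℝ := fun i => d i.1 i.2
  have hsum_eq : ∀ ε : ℝ, ∑ i : ι, w i * φ (a i + ε * b i) = costIV T N p φ R (Q ε) := by
    intro ε
    rw [costIV_sum T N h1T]
    rw [Fintype.sum_prod_type (f := fun i : ι => w i * φ (a i + ε * b i))]
    rw [← Finset.sum_coe_sort (Finset.Icc 1 T)
      (f := fun t => ∑ ω : Fin (T-2) → Fin N, (∏ s, p (ω s)) * (φ ((Q ε).v t ω) / R ^ (t - 1)))]
    apply Finset.sum_congr rfl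
    intro t _
    apply Finset.sum_congr rfl
    intro ω _
    rw [hQv]
    unfold w a b
    ring
  have ha : ∀ i : ι, a i ∈ interior D := fun i => hEint i.1 i.1.2 i.2
  have hfoc := foc_generic D φ φ' hφder w a b ha ?hmin
  case hmin =>
    intro ε hεint
    have hzero : ∀ i : ι, a i + 0 * b i = a i := fun i => by ring
    have hl : ∑ i : ι, w i * φ (a i) = costIV T N p φ R vE := by
      have := hsum_eq 0
      simp only [zero_mul, add_zero] at this
      rw [this]
      have hv0 : ∀ t ω, (Q 0).v t ω = vE.v t ω := by
        intro t ω
        rw [hQv]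
        ring
      unfold costIV
      apply congrArg
      funext ω
      rw [hv0, Finset.sum_congr rfl fun t _ => by rw [hv0]]
    rw [hl, hsum_eq ε]
    apply noSlackIV T N hT δ p q hq1 φ R I D
      (fun x hx => (hφder x hx).continuousAt) δ1 vE hEfeas.2.1 hEmax (Q ε)
    · intro t ht ω
      have := hεint ⟨⟨t, ht⟩, ω⟩
      exact this
    · exact hIC ε
    · exact hpay ε
  -- now rearrange the conclusion
  rw [← hfoc]
  rw [Fintype.sum_prod_type (f := fun i : ι => w i * (φ' (a i) * b i))]
  rw [← Finset.sum_coe_sort (Finset.Icc 1 T)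
    (f := fun t => (∑ ω : Fin (T-2) → Fin N, (∏ s, p (ω s)) * (φ' (vE.v t ω) * d t ω)) / R ^ (t - 1))]
  apply Finset.sum_congr rfl
  intro t _
  rw [Finset.sum_div]
  apply Finset.sum_congr rfl
  intro ω _
  unfold w a b
  ring

lemma EpathB_eq_wsum (T N : ℕ) (r : Fin N → ℝ) (f : (Fin (T-1) → Fin N) → ℝ) :
    EpathB T N r f = wsum (T-1) N r f := rfl

lemma discB_one (T N : ℕ) (δ : Fin N → ℝ) (ω : Fin (T-1) → Fin N) :
    discBpol T N δ 1 ω = 1 := by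
  unfold discBpol
  apply Finset.prod_eq_one
  intro s _
  rw [if_neg (by omega)]

lemma costB_sum (T N : ℕ) (p : Fin N → ℝ) (φ : ℝ → ℝ) (R : ℝ) (P : PolicyB T N) :
    costBpol T N p φ R P
      = ∑ t ∈ Finset.Icc 1 T, ∑ ω : Fin (T-1) → Fin N,
          (∏ s, p (ω s)) * (φ (P.v t ω) / R ^ (t - 1)) := by
  unfold costBpol EpathB
  have h1 : ∀ ω : Fin (T-1) → Fin N,
      (∏ s, p (ω s)) * (∑ t ∈ Finset.Icc 1 T, φ (P.v t ω) / R ^ (t - 1))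
      = ∑ t ∈ Finset.Icc 1 T, (∏ s, p (ω s)) * (φ (P.v t ω) / R ^ (t - 1)) := by
    intro ω
    rw [Finset.mul_sum]
  rw [Finset.sum_congr rfl fun ω _ => h1 ω, Finset.sum_comm]

open Filter Topology in
lemma noSlackB (T N : ℕ) (hT : 3 ≤ T) (δ p : Fin N → ℝ) (hp1 : ∑ n, p n = 1)
    (φ : ℝ → ℝ) (R I : ℝ) (D : Set ℝ)
    (hφc : ∀ x ∈ interior D, ContinuousAt φ x)
    (vB : PolicyB T N)
    (hBcost : costBpol T N p φ R vB ≤ I)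
    (hBmax : ∀ Q : PolicyB T N, FeasBD T N p φ R I D Q →
      objBpol T N δ p Q ≤ objBpol T N δ p vB)
    (Q : PolicyB T N) (hdom : ∀ t ∈ Finset.Icc 1 T, ∀ ω, Q.v t ω ∈ interior D)
    (hobj : objBpol T N δ p Q = objBpol T N δ p vB) :
    costBpol T N p φ R vB ≤ costBpol T N p φ R Q := by
  by_contra hlt
  push_neg at hlt
  have hQI : costBpol T N p φ R Q < I := lt_of_lt_of_le hlt hBcost
  have h1T : 1 ∈ Finset.Icc 1 T := by simp [Finset.mem_Icc]; omega
  let Q' : ℝ → PolicyB T N := fun η =>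
    ⟨fun t ω => Q.v t ω + (if t = 1 then η else 0),
     fun t ht ω ω' h => by rw [Q.adapted t ht ω ω' h]⟩
  have hv : ∀ η t ω, (Q' η).v t ω = Q.v t ω + (if t = 1 then η else 0) := fun _ _ _ => rfl
  have hcost' : ∀ η, costBpol T N p φ R (Q' η)
      = costBpol T N p φ R Q
        + ∑ ω : Fin (T-1) → Fin N, (∏ s, p (ω s)) * (φ (Q.v 1 ω + η) - φ (Q.v 1 ω)) := by
    intro η
    rw [costB_sum, costB_sum, Icc_one_eq_insert T (by omega), Finset.sum_insert (by simp),
      Finset.sum_insert (by simp)]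
    have hvt : ∀ t ∈ Finset.Icc 2 T, ∑ ω : Fin (T-1) → Fin N,
        (∏ s, p (ω s)) * (φ ((Q' η).v t ω) / R ^ (t-1))
        = ∑ ω : Fin (T-1) → Fin N, (∏ s, p (ω s)) * (φ (Q.v t ω) / R ^ (t-1)) := by
      intro t ht
      have h1 : t ≠ 1 := by have := Finset.mem_Icc.mp ht; omega
      apply Finset.sum_congr rfl
      intro ω _
      rw [hv, if_neg h1, add_zero]
    rw [Finset.sum_congr rfl hvt]
    have hv1 : ∀ ω : Fin (T-1) → Fin N,
        (∏ s, p (ω s)) * (φ ((Q' η).v 1 ω) / R ^ (1-1))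
        = (∏ s, p (ω s)) * (φ (Q.v 1 ω) / R ^ (1-1))
          + (∏ s, p (ω s)) * (φ (Q.v 1 ω + η) - φ (Q.v 1 ω)) := by
      intro ω
      rw [hv, if_pos rfl]
      norm_num
      ring
    rw [Finset.sum_congr rfl fun ω _ => hv1 ω, Finset.sum_add_distrib]
    ring
  have htend : Tendsto (fun η => costBpol T N p φ R (Q' η)) (𝓝 0) (𝓝 (costBpol T N p φ R Q)) := by
    have hsum : Tendsto (fun η => ∑ ω : Fin (T-1) → Fin N,
        (∏ s, p (ω s)) * (φ (Q.v 1 ω + η) - φ (Q.v 1 ω))) (𝓝 0) (𝓝 0) := by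
      have : ∀ ω : Fin (T-1) → Fin N, Tendsto
          (fun η => (∏ s, p (ω s)) * (φ (Q.v 1 ω + η) - φ (Q.v 1 ω))) (𝓝 0) (𝓝 0) := by
        intro ω
        have harg : Tendsto (fun η : ℝ => Q.v 1 ω + η) (𝓝 0) (𝓝 (Q.v 1 ω)) := by
          simpa using (continuous_add_left (Q.v 1 ω)).tendsto (0:ℝ)
        have hφt : Tendsto (fun η : ℝ => φ (Q.v 1 ω + η)) (𝓝 0) (𝓝 (φ (Q.v 1 ω))) :=
          (hφc _ (hdom 1 h1T ω)).tendsto.comp harg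
        have := (hφt.sub_const (φ (Q.v 1 ω))).const_mul ((∏ s, p (ω s)))
        simpa using this
      have := tendsto_finset_sum Finset.univ (fun ω _ => this ω)
      simpa using this
    have := (tendsto_const_nhds (x := costBpol T N p φ R Q) (f := 𝓝 (0:ℝ))).add hsum
    rw [add_zero] at this
    exact this.congr fun η => (hcost' η).symm
  have hev1 : ∀ᶠ η in 𝓝 (0:ℝ), costBpol T N p φ R (Q' η) ≤ I :=
    (htend.eventually_lt_const hQI).mono fun η h => le_of_lt h
  have hev2 : ∀ᶠ η in 𝓝 (0:ℝ), ∀ ω : Fin (T-1) → Fin N, Q.v 1 ω + η ∈ interior D := by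
    rw [Filter.eventually_all]
    intro ω
    have hc : ContinuousAt (fun η : ℝ => Q.v 1 ω + η) 0 :=
      (continuous_const.add continuous_id).continuousAt
    have := hc.eventually_mem (isOpen_interior.mem_nhds (by simpa using hdom 1 h1T ω))
    simpa using this
  obtain ⟨η, hηpos, hcostI, hdom1⟩ :
      ∃ η : ℝ, 0 < η ∧ costBpol T N p φ R (Q' η) ≤ I ∧
        ∀ ω : Fin (T-1) → Fin N, Q.v 1 ω + η ∈ interior D := by
    obtain ⟨η, h1, h2⟩ := exists_pos_of_eventually (hev1.and hev2)
    exact ⟨η, h1, h2.1, h2.2⟩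
  have hfeas : FeasBD T N p φ R I D (Q' η) := by
    refine ⟨?_, hcostI⟩
    intro t ht ω
    rcases eq_or_ne t 1 with rfl | hne
    · rw [hv, if_pos rfl]
      exact interior_subset (hdom1 ω)
    · rw [hv, if_neg hne, add_zero]
      exact interior_subset (hdom t ht ω)
  have hobj' : objBpol T N δ p (Q' η) = objBpol T N δ p Q + η := by
    have hstep : objBpol T N δ p Q + η
        = wsum (T-1) N p (fun ω =>
            (∑ t ∈ Finset.Icc 1 T, discBpol T N δ t ω * Q.v t ω) + η) := by
      rw [wsum_add, wsum_const (r := p) hp1]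
      rfl
    rw [hstep]
    unfold objBpol
    rw [EpathB_eq_wsum]
    apply wsum_congr
    intro ω
    rw [Icc_one_eq_insert T (by omega), Finset.sum_insert (by simp), Finset.sum_insert (by simp)]
    have hvt : ∀ t ∈ Finset.Icc 2 T,
        discBpol T N δ t ω * (Q' η).v t ω = discBpol T N δ t ω * Q.v t ω := by
      intro t ht
      have h1 : t ≠ 1 := by have := Finset.mem_Icc.mp ht; omega
      rw [hv, if_neg h1, add_zero]
    rw [Finset.sum_congr rfl hvt, hv, if_pos rfl, discB_one]
    ring
  have := hBmax (Q' η) hfeas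
  rw [hobj', hobj] at this
  linarith

/-- First-order condition for the efficient problem along a direction `d`. -/
lemma focB (T N : ℕ) (hT : 3 ≤ T) (δ p : Fin N → ℝ) (hp1 : ∑ n, p n = 1)
    (φ φ' : ℝ → ℝ) (R I : ℝ) (D : Set ℝ)
    (hφder : ∀ x ∈ interior D, HasDerivAt φ (φ' x) x)
    (vB : PolicyB T N)
    (hBfeas : FeasBD T N p φ R I D vB)
    (hBmax : ∀ Q : PolicyB T N, FeasBD T N p φ R I D Q →
      objBpol T N δ p Q ≤ objBpol T N δ p vB)
    (hBint : ∀ t ∈ Finset.Icc 1 T, ∀ ω, vB.v t ω ∈ interior D)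
    (d : ℕ → (Fin (T-1) → Fin N) → ℝ)
    (hdad : ∀ t : ℕ, t ≤ T - 1 → ∀ ω ω' : Fin (T-1) → Fin N,
      (∀ s : Fin (T-1), (s : ℕ) < t → ω s = ω' s) → d t ω = d t ω')
    (hobj0 : wsum (T-1) N p (fun ω =>
      ∑ t ∈ Finset.Icc 1 T, discBpol T N δ t ω * d t ω) = 0) :
    ∑ t ∈ Finset.Icc 1 T, (∑ ω : Fin (T-1) → Fin N,
      (∏ s, p (ω s)) * (φ' (vB.v t ω) * d t ω)) / R ^ (t - 1) = 0 := by
  let Q : ℝ → PolicyB T N := fun ε =>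
    ⟨fun t ω => vB.v t ω + ε * d t ω,
     fun t ht ω ω' h => by
       rw [vB.adapted t ht ω ω' h, hdad t ht ω ω' h]⟩
  have hQv : ∀ ε t ω, (Q ε).v t ω = vB.v t ω + ε * d t ω := fun _ _ _ => rfl
  have hobj : ∀ ε, objBpol T N δ p (Q ε) = objBpol T N δ p vB := by
    intro ε
    unfold objBpol
    rw [EpathB_eq_wsum, EpathB_eq_wsum]
    have : ∀ ω, ∑ t ∈ Finset.Icc 1 T, discBpol T N δ t ω * (Q ε).v t ω
        = (∑ t ∈ Finset.Icc 1 T, discBpol T N δ t ω * vB.v t ω)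
          + ε * (∑ t ∈ Finset.Icc 1 T, discBpol T N δ t ω * d t ω) := by
      intro ω
      have h2 : ∀ t ∈ Finset.Icc 1 T, discBpol T N δ t ω * (Q ε).v t ω
          = discBpol T N δ t ω * vB.v t ω + ε * (discBpol T N δ t ω * d t ω) := by
        intro t _
        rw [hQv]
        ring
      rw [Finset.sum_congr rfl h2, Finset.sum_add_distrib, ← Finset.mul_sum]
    rw [wsum_congr this, wsum_add, wsum_mul, hobj0]
    ring
  have h1T : (1:ℕ) ≤ T := by omega
  let ι := {t : ℕ // t ∈ Finset.Icc 1 T} × ((Fin (T-1)) → Fin N)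
  let w : ι → ℝ := fun i => (∏ s, p (i.2 s)) / R ^ ((i.1 : ℕ) - 1)
  let a : ι → ℝ := fun i => vB.v i.1 i.2
  let b : ι → ℝ := fun i => d i.1 i.2
  have hsum_eq : ∀ ε : ℝ, ∑ i : ι, w i * φ (a i + ε * b i) = costBpol T N p φ R (Q ε) := by
    intro ε
    rw [costB_sum T N]
    rw [Fintype.sum_prod_type (f := fun i : ι => w i * φ (a i + ε * b i))]
    rw [← Finset.sum_coe_sort (Finset.Icc 1 T)
      (f := fun t => ∑ ω : Fin (T-1) → Fin N, (∏ s, p (ω s)) * (φ ((Q ε).v t ω) / R ^ (t - 1)))]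
    apply Finset.sum_congr rfl
    intro t _
    apply Finset.sum_congr rfl
    intro ω _
    rw [hQv]
    unfold w a b
    ring
  have ha : ∀ i : ι, a i ∈ interior D := fun i => hBint i.1 i.1.2 i.2
  have hfoc := foc_generic D φ φ' hφder w a b ha ?hmin
  case hmin =>
    intro ε hεint
    have hl : ∑ i : ι, w i * φ (a i) = costBpol T N p φ R vB := by
      have := hsum_eq 0
      simp only [zero_mul, add_zero] at this
      rw [this]
      have hv0 : ∀ t ω, (Q 0).v t ω = vB.v t ω := by
        intro t ω
        rw [hQv]
        ring
      rw [costB_sum, costB_sum]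
      apply Finset.sum_congr rfl
      intro t _
      apply Finset.sum_congr rfl
      intro ω _
      rw [hv0]
    rw [hl, hsum_eq ε]
    apply noSlackB T N hT δ p hp1 φ R I D
      (fun x hx => (hφder x hx).continuousAt) vB hBfeas.2 hBmax (Q ε)
    · intro t ht ω
      exact hεint ⟨⟨t, ht⟩, ω⟩
    · exact hobj ε
  rw [← hfoc]
  rw [Fintype.sum_prod_type (f := fun i : ι => w i * (φ' (a i) * b i))]
  rw [← Finset.sum_coe_sort (Finset.Icc 1 T)
    (f := fun t => (∑ ω : Fin (T-1) → Fin N, (∏ s, p (ω s)) * (φ' (vB.v t ω) * d t ω)) / R ^ (t - 1))]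
  apply Finset.sum_congr rfl
  intro t _
  rw [Finset.sum_div]
  apply Finset.sum_congr rfl
  intro ω _
  unfold w a b
  ring

lemma discIV_congr (T N : ℕ) (δ : Fin N → ℝ) (t : ℕ) (ω ω' : Fin (T-2) → Fin N)
    (h : ∀ s : Fin (T-2), (s : ℕ) + 2 < t → ω s = ω' s) :
    discIV T N δ t ω = discIV T N δ t ω' := by
  unfold discIV
  apply Finset.prod_congr rfl
  intro s _
  by_cases hs : (s : ℕ) + 2 < t
  · rw [if_pos hs, if_pos hs, h s hs]
  · rw [if_neg hs, if_neg hs]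

lemma discCont_congr (T N : ℕ) (δ : Fin N → ℝ) (t τ : ℕ) (ω ω' : Fin (T-2) → Fin N)
    (h : ∀ s : Fin (T-2), t + 1 ≤ (s : ℕ) + 2 → (s : ℕ) + 2 < τ → ω s = ω' s) :
    discCont T N δ t τ ω = discCont T N δ t τ ω' := by
  unfold discCont
  apply Finset.prod_congr rfl
  intro s _
  by_cases hs : t + 1 ≤ (s : ℕ) + 2 ∧ (s : ℕ) + 2 < τ
  · rw [if_pos hs, if_pos hs, h s hs.1 hs.2]
  · rw [if_neg hs, if_neg hs]

lemma discIV_succ (T N : ℕ) (δ : Fin N → ℝ) (t0 : ℕ)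
    (s0 : Fin (T-2)) (hs0 : (s0 : ℕ) + 2 = t0) (ω : Fin (T-2) → Fin N) :
    discIV T N δ (t0+1) ω = discIV T N δ t0 ω * δ (ω s0) := by
  unfold discIV
  have key : ∀ s : Fin (T-2), (if (s : ℕ) + 2 < t0 + 1 then δ (ω s) else 1)
      = (if (s : ℕ) + 2 < t0 then δ (ω s) else 1) * (if s = s0 then δ (ω s) else 1) := by
    intro s
    by_cases h1 : s = s0
    · subst h1
      rw [if_pos (by omega), if_neg (by omega), if_pos rfl, one_mul]
    · have hv : (s : ℕ) ≠ (s0 : ℕ) := fun h => h1 (Fin.ext h)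
      by_cases h3 : (s : ℕ) + 2 < t0
      · rw [if_pos (by omega), if_pos h3, if_neg h1, mul_one]
      · rw [if_neg (by omega), if_neg h3, if_neg h1, mul_one]
  rw [Finset.prod_congr rfl fun s _ => key s, Finset.prod_mul_distrib,
    Finset.prod_ite_eq' Finset.univ s0 (fun s => δ (ω s))]
  simp

lemma discCont_succ (T N : ℕ) (δ : Fin N → ℝ) (t' t0 : ℕ) (hlt : t' < t0)
    (s0 : Fin (T-2)) (hs0 : (s0 : ℕ) + 2 = t0) (ω : Fin (T-2) → Fin N) :
    discCont T N δ t' (t0+1) ω = discCont T N δ t' t0 ω * δ (ω s0) := by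
  unfold discCont
  have key : ∀ s : Fin (T-2),
      (if t' + 1 ≤ (s : ℕ) + 2 ∧ (s : ℕ) + 2 < t0 + 1 then δ (ω s) else 1)
      = (if t' + 1 ≤ (s : ℕ) + 2 ∧ (s : ℕ) + 2 < t0 then δ (ω s) else 1)
        * (if s = s0 then δ (ω s) else 1) := by
    intro s
    by_cases h1 : s = s0
    · subst h1
      rw [if_pos (by constructor <;> omega), if_neg (by omega), if_pos rfl, one_mul]
    · have hv : (s : ℕ) ≠ (s0 : ℕ) := fun h => h1 (Fin.ext h)
      by_cases h3 : t' + 1 ≤ (s : ℕ) + 2 ∧ (s : ℕ) + 2 < t0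
      · rw [if_pos ⟨h3.1, by omega⟩, if_pos h3, if_neg h1, mul_one]
      · rw [if_neg (by omega), if_neg h3, if_neg h1, mul_one]
  rw [Finset.prod_congr rfl fun s _ => key s, Finset.prod_mul_distrib,
    Finset.prod_ite_eq' Finset.univ s0 (fun s => δ (ω s))]
  simp

lemma discCont_triv (T N : ℕ) (δ : Fin N → ℝ) (t τ : ℕ) (h : τ ≤ t + 1)
    (ω : Fin (T-2) → Fin N) :
    discCont T N δ t τ ω = 1 := by
  unfold discCont
  apply Finset.prod_eq_one
  intro s _
  rw [if_neg (by omega)]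

lemma splice_low (T N : ℕ) (t : ℕ) (ω ω' : Fin (T-2) → Fin N) (s : Fin (T-2))
    (h : (s : ℕ) + 2 ≤ t) : splice T N t ω ω' s = ω s := if_pos h

lemma splice_high (T N : ℕ) (t : ℕ) (ω ω' : Fin (T-2) → Fin N) (s : Fin (T-2))
    (h : ¬ ((s : ℕ) + 2 ≤ t)) : splice T N t ω ω' s = ω' s := if_neg h

lemma eulerIV (T N : ℕ) (hT : 3 ≤ T)
    (R I : ℝ) (hR : 1 ≤ R)
    (D : Set ℝ) (φ φ' : ℝ → ℝ)
    (hφder : ∀ x ∈ interior D, HasDerivAt φ (φ' x) x)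
    (δ : Fin N → ℝ) (hδpos : ∀ n, 0 < δ n)
    (p q : Fin N → ℝ) (hp : ∀ n, 0 < p n) (hq : ∀ n, 0 < q n)
    (hp1 : ∑ n, p n = 1) (hq1 : ∑ n, q n = 1)
    (δ1 : ℝ) (vE : PolicyIV T N)
    (hEfeas : FeasIVD T N δ p q φ R I D vE)
    (hEmax : ∀ Q : PolicyIV T N, FeasIVD T N δ p q φ R I D Q →
      payoffIV T N δ q δ1 Q ≤ payoffIV T N δ q δ1 vE)
    (hEint : ∀ t ∈ Finset.Icc 1 T, ∀ ω, vE.v t ω ∈ interior D)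
    (t0 : ℕ) (h2 : 2 ≤ t0) (hT1 : t0 ≤ T - 1) (ω0 : Fin (T-2) → Fin N) :
    Epath T N p (fun ω' => φ' (vE.v (t0 + 1) (splice T N (t0 - 1) ω0 ω'))) =
      R * (∑ n, q n * δ n) *
        Epath T N p (fun ω' => φ' (vE.v t0 (splice T N (t0 - 1) ω0 ω'))) := by
  classical
  have hRpos : (0:ℝ) < R := by linarith
  set δb : ℝ := ∑ n, q n * δ n with hδb
  have hδbpos : 0 < δb := by
    rw [hδb]
    have hne : (Finset.univ : Finset (Fin N)).Nonempty := by
      by_contra h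
      rw [Finset.not_nonempty_iff_eq_empty] at h
      rw [h] at hq1
      simp at hq1
    exact Finset.sum_pos (fun n _ => mul_pos (hq n) (hδpos n)) hne
  set s0 : Fin (T-2) := ⟨t0-2, by omega⟩ with hs0def
  have hs0 : (s0 : ℕ) + 2 = t0 := by simp [hs0def]; omega
  set pref : (Fin (T-2) → Fin N) → Prop :=
    fun ω => ∀ s : Fin (T-2), (s : ℕ) + 2 ≤ t0 - 1 → ω s = ω0 s with hprefdef
  set χ : (Fin (T-2) → Fin N) → ℝ := fun ω => if pref ω then 1 else 0 with hχdef
  set d : ℕ → (Fin (T-2) → Fin N) → ℝ :=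
    fun t ω => χ ω * (if t = t0 then 1 else if t = t0 + 1 then -1/δb else 0) with hddef
  have hχcongr : ∀ ω ω' : Fin (T-2) → Fin N,
      (∀ s : Fin (T-2), (s : ℕ) + 2 ≤ t0 - 1 → ω s = ω' s) → χ ω = χ ω' := by
    intro ω ω' hag
    rw [hχdef]
    dsimp only
    congr 1
    rw [eq_iff_iff, hprefdef]
    constructor
    · intro h s hs
      rw [← hag s hs]
      exact h s hs
    · intro h s hs
      rw [hag s hs]
      exact h s hs
  have hχ_ne_s0 : ∀ ω ω' : Fin (T-2) → Fin N,
      (∀ s : Fin (T-2), s ≠ s0 → ω s = ω' s) → χ ω = χ ω' := by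
    intro ω ω' hag
    apply hχcongr
    intro s hs
    apply hag
    intro h
    rw [h] at hs
    omega
  -- the key independence computation
  have hB0 : wsum (T-2) N q (fun ω => 1 - δ (ω s0) / δb) = 0 := by
    rw [wsum_marginal hq1 s0 (fun n => 1 - δ n / δb)]
    have : ∀ n : Fin N, q n * (1 - δ n / δb) = q n - (q n * δ n) / δb := by
      intro n
      field_simp
    rw [Finset.sum_congr rfl fun n _ => this n, Finset.sum_sub_distrib, ← Finset.sum_div,
      ← hδb, hq1, div_self (ne_of_gt hδbpos)]
    ring
  -- contA of d at various dates
  have hcont_gt : ∀ t' : ℕ, t0 < t' → ∀ α, contA T N δ q d t' α = 0 := by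
    intro t' hgt α
    unfold contA
    rw [Epath_eq_wsum]
    have hz : ∀ ω'' : Fin (T-2) → Fin N,
        (∑ τ ∈ Finset.Icc (t'+1) T, discCont T N δ t' τ (splice T N t' α ω'')
          * d τ (splice T N t' α ω'')) = 0 := by
      intro ω''
      have : ∀ τ ∈ Finset.Icc (t'+1) T, discCont T N δ t' τ (splice T N t' α ω'')
          * d τ (splice T N t' α ω'')
          = (χ (splice T N t' α ω'') * discCont T N δ t' τ (splice T N t' α ω''))
            * (if τ = t0 then 1 else if τ = t0 + 1 then -1/δb else 0) := by
        intro τ _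
        rw [hddef]
        ring
      rw [Finset.sum_congr rfl this, sum_two' _ t0 (t0+1) (by omega) _ 1 (-1/δb)]
      rw [if_neg (by simp only [Finset.mem_Icc]; omega), if_neg (by simp only [Finset.mem_Icc]; omega)]
      ring
    rw [wsum_congr hz, wsum_const hq1]
  have hcont_eq : ∀ α, contA T N δ q d t0 α = χ α * (-1/δb) := by
    intro α
    unfold contA
    rw [Epath_eq_wsum]
    have hz : ∀ ω'' : Fin (T-2) → Fin N,
        (∑ τ ∈ Finset.Icc (t0+1) T, discCont T N δ t0 τ (splice T N t0 α ω'')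
          * d τ (splice T N t0 α ω'')) = χ α * (-1/δb) := by
      intro ω''
      have h1 : ∀ τ ∈ Finset.Icc (t0+1) T, discCont T N δ t0 τ (splice T N t0 α ω'')
          * d τ (splice T N t0 α ω'')
          = (χ (splice T N t0 α ω'') * discCont T N δ t0 τ (splice T N t0 α ω''))
            * (if τ = t0 then 1 else if τ = t0 + 1 then -1/δb else 0) := by
        intro τ _
        rw [hddef]
        ring
      rw [Finset.sum_congr rfl h1, sum_two' _ t0 (t0+1) (by omega) _ 1 (-1/δb)]
      rw [if_neg (by simp only [Finset.mem_Icc]; omega), if_pos (by simp only [Finset.mem_Icc]; omega)]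
      rw [discCont_triv T N δ t0 (t0+1) (by omega)]
      have hχsp : χ (splice T N t0 α ω'') = χ α := by
        apply hχcongr
        intro s hs
        exact splice_low T N t0 α ω'' s (by omega)
      rw [hχsp]
      ring
    rw [wsum_congr hz, wsum_const hq1]
  have hcont_lt : ∀ t' : ℕ, t' < t0 → ∀ α, contA T N δ q d t' α = 0 := by
    intro t' hlt α
    unfold contA
    rw [Epath_eq_wsum]
    have hz : ∀ ω'' : Fin (T-2) → Fin N,
        (∑ τ ∈ Finset.Icc (t'+1) T, discCont T N δ t' τ (splice T N t' α ω'')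
          * d τ (splice T N t' α ω''))
        = (χ (splice T N t' α ω'') * discCont T N δ t' t0 (splice T N t' α ω''))
          * (1 - δ (ω'' s0) / δb) := by
      intro ω''
      have h1 : ∀ τ ∈ Finset.Icc (t'+1) T, discCont T N δ t' τ (splice T N t' α ω'')
          * d τ (splice T N t' α ω'')
          = (χ (splice T N t' α ω'') * discCont T N δ t' τ (splice T N t' α ω''))
            * (if τ = t0 then 1 else if τ = t0 + 1 then -1/δb else 0) := by
        intro τ _
        rw [hddef]
        ring
      rw [Finset.sum_congr rfl h1, sum_two' _ t0 (t0+1) (by omega) _ 1 (-1/δb)]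
      rw [if_pos (by simp only [Finset.mem_Icc]; omega), if_pos (by simp only [Finset.mem_Icc]; omega)]
      rw [discCont_succ T N δ t' t0 hlt s0 hs0]
      have hsps0 : splice T N t' α ω'' s0 = ω'' s0 :=
        splice_high T N t' α ω'' s0 (by omega)
      rw [hsps0]
      field_simp
      ring
    rw [wsum_congr hz]
    rw [wsum_factor hq1 (fun s => s ≠ s0)
      (fun ω'' => χ (splice T N t' α ω'') * discCont T N δ t' t0 (splice T N t' α ω''))
      (fun ω'' => 1 - δ (ω'' s0) / δb) ?_ ?_]
    · rw [hB0, mul_zero]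
    · intro ω1 ω2 hag
      have hsp : ∀ s : Fin (T-2), s ≠ s0 →
          splice T N t' α ω1 s = splice T N t' α ω2 s := by
        intro s hs
        unfold splice
        by_cases h : (s : ℕ) + 2 ≤ t'
        · rw [if_pos h, if_pos h]
        · rw [if_neg h, if_neg h]
          exact hag s hs
      have e1 : χ (splice T N t' α ω1) = χ (splice T N t' α ω2) := hχ_ne_s0 _ _ hsp
      have e2 : discCont T N δ t' t0 (splice T N t' α ω1)
          = discCont T N δ t' t0 (splice T N t' α ω2) := by
        apply discCont_congr
        intro s _ hlt2
        apply hsp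
        intro h
        rw [h] at hlt2
        omega
      rw [e1, e2]
    · intro ω1 ω2 hag
      have := hag s0 (by simp)
      rw [this]
  -- adaptedness of the direction
  have hdad : ∀ t : ℕ, t ≤ T - 1 → ∀ ω ω' : Fin (T-2) → Fin N,
      (∀ s : Fin (T-2), (s : ℕ) + 2 ≤ t → ω s = ω' s) → d t ω = d t ω' := by
    intro t ht ω ω' hag
    rcases eq_or_ne t t0 with rfl | h1
    · show χ ω * _ = χ ω' * _
      rw [hχcongr ω ω' (fun s hs => hag s (by omega))]
    rcases eq_or_ne t (t0+1) with rfl | hb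
    · show χ ω * _ = χ ω' * _
      rw [hχcongr ω ω' (fun s hs => hag s (by omega))]
    · show χ ω * _ = χ ω' * _
      rw [if_neg h1, if_neg hb, mul_zero, mul_zero]
  -- payoff invariance
  have hpay0 : wsum (T-2) N q (fun ω =>
      d 1 ω + δ1 * ∑ t ∈ Finset.Icc 2 T, discIV T N δ t ω * d t ω) = 0 := by
    have hint : ∀ ω : Fin (T-2) → Fin N,
        d 1 ω + δ1 * ∑ t ∈ Finset.Icc 2 T, discIV T N δ t ω * d t ω
        = δ1 * ((χ ω * discIV T N δ t0 ω) * (1 - δ (ω s0) / δb)) := by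
      intro ω
      have hd1 : d 1 ω = 0 := by
        show χ ω * _ = 0
        rw [if_neg (by omega), if_neg (by omega), mul_zero]
      have h1 : ∀ t ∈ Finset.Icc 2 T, discIV T N δ t ω * d t ω
          = (χ ω * discIV T N δ t ω) * (if t = t0 then 1 else if t = t0+1 then -1/δb else 0) := by
        intro t _
        rw [hddef]
        ring
      rw [hd1, Finset.sum_congr rfl h1, sum_two' _ t0 (t0+1) (by omega) _ 1 (-1/δb),
        if_pos (by simp only [Finset.mem_Icc]; omega), if_pos (by simp only [Finset.mem_Icc]; omega),
        discIV_succ T N δ t0 s0 hs0]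
      ring
    rw [wsum_congr hint, wsum_mul]
    rw [wsum_factor hq1 (fun s => s ≠ s0)
      (fun ω => χ ω * discIV T N δ t0 ω) (fun ω => 1 - δ (ω s0) / δb) ?_ ?_]
    · rw [hB0]
      ring
    · intro ω1 ω2 hag
      have e1 : χ ω1 = χ ω2 := hχ_ne_s0 _ _ hag
      have e2 : discIV T N δ t0 ω1 = discIV T N δ t0 ω2 := by
        apply discIV_congr
        intro s hlt2
        apply hag
        intro h
        rw [h] at hlt2
        omega
      rw [e1, e2]
    · intro ω1 ω2 hag
      rw [hag s0 (by simp)]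
  -- IC invariance
  have hICd : ∀ t : ℕ, 2 ≤ t → t ≤ T - 1 → ∀ ω ω' : Fin (T-2) → Fin N,
      (∀ s : Fin (T-2), (s : ℕ) + 2 < t → ω s = ω' s) →
      d t ω = d t ω' ∧ contA T N δ q d t ω = contA T N δ q d t ω' := by
    intro t ht2 htT ω ω' hag
    rcases lt_trichotomy t t0 with hlt | heq | hgt
    · constructor
      · show χ ω * _ = χ ω' * _
        rw [if_neg (by omega), if_neg (by omega), mul_zero, mul_zero]
      · rw [hcont_lt t hlt ω, hcont_lt t hlt ω']
    · subst heq
      have hχeq : χ ω = χ ω' := hχcongr ω ω' (fun s hs => hag s (by omega))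
      constructor
      · show χ ω * _ = χ ω' * _
        rw [hχeq]
      · rw [hcont_eq ω, hcont_eq ω', hχeq]
    · constructor
      · rcases eq_or_ne t (t0+1) with rfl | hb
        · show χ ω * _ = χ ω' * _
          rw [hχcongr ω ω' (fun s hs => hag s (by omega))]
        · show χ ω * _ = χ ω' * _
          rw [if_neg (by omega), if_neg hb, mul_zero, mul_zero]
      · rw [hcont_gt t hgt ω, hcont_gt t hgt ω']
  -- apply the first-order condition
  have hfoc := focIV T N hT δ p q hq1 φ φ' R I D hφder δ1 vE hEfeas hEmax hEint d hdad hpay0 hICd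
  -- extract the two nonzero terms
  set g : ℕ → ℝ := fun t => ∑ ω : Fin (T-2) → Fin N,
    (∏ s, p (ω s)) * (χ ω * φ' (vE.v t ω)) with hgdef
  have hterm : ∀ t ∈ Finset.Icc 1 T,
      (∑ ω : Fin (T-2) → Fin N, (∏ s, p (ω s)) * (φ' (vE.v t ω) * d t ω)) / R ^ (t-1)
      = (g t / R ^ (t-1)) * (if t = t0 then 1 else if t = t0+1 then -1/δb else 0) := by
    intro t _
    have hnum : (∑ ω : Fin (T-2) → Fin N, (∏ s, p (ω s)) * (φ' (vE.v t ω) * d t ω))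
        = g t * (if t = t0 then 1 else if t = t0+1 then -1/δb else 0) := by
      rw [hgdef]
      dsimp only
      rw [Finset.sum_mul]
      apply Finset.sum_congr rfl
      intro ω _
      rw [hddef]
      ring
    rw [hnum]
    ring
  rw [Finset.sum_congr rfl hterm, sum_two' _ t0 (t0+1) (by omega) _ 1 (-1/δb),
    if_pos (by simp only [Finset.mem_Icc]; omega),
    if_pos (by simp only [Finset.mem_Icc]; omega)] at hfoc
  -- convert weighted sums into spliced expectations
  set π0 : ℝ := wsum (T-2) N p χ with hπ0def
  have hπ0pos : 0 < π0 := by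
    rw [hπ0def]
    unfold wsum
    apply Finset.sum_pos'
    · intro ω _
      apply mul_nonneg (Finset.prod_nonneg fun s _ => (hp _).le)
      rw [hχdef]
      dsimp only
      split_ifs <;> norm_num
    · refine ⟨ω0, Finset.mem_univ _, ?_⟩
      have hχω0 : χ ω0 = 1 := by
        rw [hχdef]
        dsimp only
        rw [if_pos (fun s _ => rfl)]
      rw [hχω0, mul_one]
      exact Finset.prod_pos fun s _ => hp _
  have hconv : ∀ t : ℕ, g t
      = π0 * wsum (T-2) N p (fun ω' => φ' (vE.v t (splice T N (t0-1) ω0 ω'))) := by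
    intro t
    have step1 : ∀ ω : Fin (T-2) → Fin N,
        χ ω * φ' (vE.v t ω) = χ ω * φ' (vE.v t (splice T N (t0-1) ω0 ω)) := by
      intro ω
      by_cases hpω : pref ω
      · have hspl : splice T N (t0-1) ω0 ω = ω := by
          funext s
          unfold splice
          by_cases hs : (s : ℕ) + 2 ≤ t0 - 1
          · rw [if_pos hs, hpω s hs]
          · rw [if_neg hs]
        rw [hspl]
      · have : χ ω = 0 := by
          rw [hχdef]
          dsimp only
          rw [if_neg hpω]
        rw [this, zero_mul, zero_mul]
    have hgw : g t = wsum (T-2) N p (fun ω => χ ω * φ' (vE.v t ω)) := rfl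
    rw [hgw, wsum_congr step1]
    rw [wsum_factor hp1 (fun s => (s : ℕ) + 2 ≤ t0 - 1) χ
      (fun ω => φ' (vE.v t (splice T N (t0-1) ω0 ω))) ?_ ?_]
    · intro ω1 ω2 hag
      exact hχcongr ω1 ω2 hag
    · intro ω1 ω2 hag
      have hspl : splice T N (t0-1) ω0 ω1 = splice T N (t0-1) ω0 ω2 := by
        funext s
        unfold splice
        by_cases hs : (s : ℕ) + 2 ≤ t0 - 1
        · rw [if_pos hs, if_pos hs]
        · rw [if_neg hs, if_neg hs]
          exact hag s hs
      rw [hspl]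
  rw [hconv t0, hconv (t0+1), Nat.add_sub_cancel] at hfoc
  -- final algebra
  rw [Epath_eq_wsum, Epath_eq_wsum]
  set X : ℝ := wsum (T-2) N p (fun ω' => φ' (vE.v t0 (splice T N (t0-1) ω0 ω'))) with hX
  set Y : ℝ := wsum (T-2) N p (fun ω' => φ' (vE.v (t0+1) (splice T N (t0-1) ω0 ω'))) with hY
  have hπ : π0 ≠ 0 := ne_of_gt hπ0pos
  have hRne : R ≠ 0 := ne_of_gt hRpos
  have hRt0 : (R : ℝ) ^ (t0-1) ≠ 0 := pow_ne_zero _ hRne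
  have hδbne : δb ≠ 0 := ne_of_gt hδbpos
  have hRt : R ^ t0 = R ^ (t0-1) * R := by
    rw [← pow_succ]
    congr 1
    omega
  rw [hRt] at hfoc
  field_simp at hfoc
  have h1 : (π0 * R ^ (t0-1)) * Y = (π0 * R ^ (t0-1)) * (R * δb * X) := by
    linear_combination (-R ^ (t0-1)) * hfoc
  exact mul_left_cancel₀ (mul_ne_zero hπ hRt0) h1

lemma discIV_two (T N : ℕ) (δ : Fin N → ℝ) (ω : Fin (T-2) → Fin N) :
    discIV T N δ 2 ω = 1 := by
  unfold discIV
  apply Finset.prod_eq_one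
  intro s _
  rw [if_neg (by omega)]

lemma eulerIV1 (T N : ℕ) (hT : 3 ≤ T)
    (R I : ℝ) (hR : 1 ≤ R)
    (D : Set ℝ) (φ φ' : ℝ → ℝ)
    (hφder : ∀ x ∈ interior D, HasDerivAt φ (φ' x) x)
    (δ : Fin N → ℝ) (hδpos : ∀ n, 0 < δ n)
    (p q : Fin N → ℝ) (hp : ∀ n, 0 < p n) (hq : ∀ n, 0 < q n)
    (hp1 : ∑ n, p n = 1) (hq1 : ∑ n, q n = 1)
    (n1 : Fin N) (vE : PolicyIV T N)
    (hEfeas : FeasIVD T N δ p q φ R I D vE)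
    (hEmax : ∀ Q : PolicyIV T N, FeasIVD T N δ p q φ R I D Q →
      payoffIV T N δ q (δ n1) Q ≤ payoffIV T N δ q (δ n1) vE)
    (hEint : ∀ t ∈ Finset.Icc 1 T, ∀ ω, vE.v t ω ∈ interior D)
    (ω : Fin (T-2) → Fin N) :
    Epath T N p (fun ω' => φ' (vE.v 2 ω')) = R * δ n1 * φ' (vE.v 1 ω) := by
  classical
  have hRpos : (0:ℝ) < R := by linarith
  have hδn1 : δ n1 ≠ 0 := ne_of_gt (hδpos n1)
  set d : ℕ → (Fin (T-2) → Fin N) → ℝ :=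
    fun t _ => if t = 1 then 1 else if t = 2 then -1/δ n1 else 0 with hddef
  have hdad : ∀ t : ℕ, t ≤ T - 1 → ∀ ω1 ω2 : Fin (T-2) → Fin N,
      (∀ s : Fin (T-2), (s : ℕ) + 2 ≤ t → ω1 s = ω2 s) → d t ω1 = d t ω2 :=
    fun _ _ _ _ _ => rfl
  have hpay0 : wsum (T-2) N q (fun ω' =>
      d 1 ω' + δ n1 * ∑ t ∈ Finset.Icc 2 T, discIV T N δ t ω' * d t ω') = 0 := by
    have hz : ∀ ω' : Fin (T-2) → Fin N,
        d 1 ω' + δ n1 * ∑ t ∈ Finset.Icc 2 T, discIV T N δ t ω' * d t ω' = 0 := by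
      intro ω'
      have h1 : ∀ t ∈ Finset.Icc 2 T, discIV T N δ t ω' * d t ω'
          = discIV T N δ t ω' * (if t = 1 then 1 else if t = 2 then -1/δ n1 else 0) := by
        intro t _
        rfl
      rw [Finset.sum_congr rfl h1, sum_two' _ 1 2 (by omega) _ 1 (-1/δ n1),
        if_neg (by simp only [Finset.mem_Icc]; omega),
        if_pos (by simp only [Finset.mem_Icc]; omega), discIV_two]
      show (1:ℝ) + δ n1 * (0 + 1 * (-1/δ n1)) = 0
      field_simp
      ring
    rw [wsum_congr hz, wsum_const hq1]
  have hICd : ∀ t : ℕ, 2 ≤ t → t ≤ T - 1 → ∀ ω1 ω2 : Fin (T-2) → Fin N,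
      (∀ s : Fin (T-2), (s : ℕ) + 2 < t → ω1 s = ω2 s) →
      d t ω1 = d t ω2 ∧ contA T N δ q d t ω1 = contA T N δ q d t ω2 := by
    intro t ht2 htT ω1 ω2 _
    refine ⟨rfl, ?_⟩
    have hzero : ∀ α, contA T N δ q d t α = 0 := by
      intro α
      unfold contA
      rw [Epath_eq_wsum]
      have hz : ∀ ω'' : Fin (T-2) → Fin N,
          (∑ τ ∈ Finset.Icc (t+1) T, discCont T N δ t τ (splice T N t α ω'')
            * d τ (splice T N t α ω'')) = 0 := by
        intro ω''
        have h1 : ∀ τ ∈ Finset.Icc (t+1) T, discCont T N δ t τ (splice T N t α ω'')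
            * d τ (splice T N t α ω'')
            = discCont T N δ t τ (splice T N t α ω'')
              * (if τ = 1 then 1 else if τ = 2 then -1/δ n1 else 0) := by
          intro τ _
          rfl
        rw [Finset.sum_congr rfl h1, sum_two' _ 1 2 (by omega) _ 1 (-1/δ n1),
          if_neg (by simp only [Finset.mem_Icc]; omega),
          if_neg (by simp only [Finset.mem_Icc]; omega)]
        ring
      rw [wsum_congr hz, wsum_const hq1]
    rw [hzero ω1, hzero ω2]
  have hfoc := focIV T N hT δ p q hq1 φ φ' R I D hφder (δ n1) vE hEfeas hEmax hEint d
    hdad hpay0 hICd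
  set g : ℕ → ℝ := fun t => ∑ ω' : Fin (T-2) → Fin N,
    (∏ s, p (ω' s)) * φ' (vE.v t ω') with hgdef
  have hterm : ∀ t ∈ Finset.Icc 1 T,
      (∑ ω' : Fin (T-2) → Fin N, (∏ s, p (ω' s)) * (φ' (vE.v t ω') * d t ω')) / R ^ (t-1)
      = (g t / R ^ (t-1)) * (if t = 1 then 1 else if t = 2 then -1/δ n1 else 0) := by
    intro t _
    have hnum : (∑ ω' : Fin (T-2) → Fin N, (∏ s, p (ω' s)) * (φ' (vE.v t ω') * d t ω'))
        = g t * (if t = 1 then 1 else if t = 2 then -1/δ n1 else 0) := by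
      rw [hgdef]
      dsimp only
      rw [Finset.sum_mul]
      apply Finset.sum_congr rfl
      intro ω' _
      show (∏ s, p (ω' s)) * (φ' (vE.v t ω')
        * (if t = 1 then (1:ℝ) else if t = 2 then -1/δ n1 else 0)) = _
      ring
    rw [hnum]
    ring
  rw [Finset.sum_congr rfl hterm, sum_two' _ 1 2 (by omega) _ 1 (-1/δ n1),
    if_pos (by simp only [Finset.mem_Icc]; omega),
    if_pos (by simp only [Finset.mem_Icc]; omega)] at hfoc
  -- v 1 is constant
  have hg1 : g 1 = φ' (vE.v 1 ω) := by
    have hconst : ∀ ω' : Fin (T-2) → Fin N, φ' (vE.v 1 ω') = φ' (vE.v 1 ω) := by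
      intro ω'
      rw [vE.adapted 1 (by omega) ω' ω (fun s hs => by omega)]
    rw [hgdef]
    dsimp only
    have : ∀ ω' : Fin (T-2) → Fin N,
        (∏ s, p (ω' s)) * φ' (vE.v 1 ω') = (∏ s, p (ω' s)) * φ' (vE.v 1 ω) :=
      fun ω' => by rw [hconst ω']
    rw [Finset.sum_congr rfl fun ω' _ => this ω']
    have := wsum_const (k := T-2) (r := p) hp1 (φ' (vE.v 1 ω))
    unfold wsum at this
    exact this
  have hg2 : g 2 = Epath T N p (fun ω' => φ' (vE.v 2 ω')) := rfl
  rw [hg1, hg2] at hfoc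
  norm_num at hfoc
  set Y : ℝ := Epath T N p (fun ω' => φ' (vE.v 2 ω')) with hYdef
  have hRne : R ≠ 0 := ne_of_gt hRpos
  field_simp at hfoc
  linarith [hfoc]

lemma discB_congr (T N : ℕ) (δ : Fin N → ℝ) (t : ℕ) (ω ω' : Fin (T-1) → Fin N)
    (h : ∀ s : Fin (T-1), (s : ℕ) + 1 < t → ω s = ω' s) :
    discBpol T N δ t ω = discBpol T N δ t ω' := by
  unfold discBpol
  apply Finset.prod_congr rfl
  intro s _
  by_cases hs : (s : ℕ) + 1 < t
  · rw [if_pos hs, if_pos hs, h s hs]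
  · rw [if_neg hs, if_neg hs]

lemma discB_succ (T N : ℕ) (δ : Fin N → ℝ) (t0 : ℕ)
    (s0 : Fin (T-1)) (hs0 : (s0 : ℕ) + 1 = t0) (ω : Fin (T-1) → Fin N) :
    discBpol T N δ (t0+1) ω = discBpol T N δ t0 ω * δ (ω s0) := by
  unfold discBpol
  have key : ∀ s : Fin (T-1), (if (s : ℕ) + 1 < t0 + 1 then δ (ω s) else 1)
      = (if (s : ℕ) + 1 < t0 then δ (ω s) else 1) * (if s = s0 then δ (ω s) else 1) := by
    intro s
    by_cases h1 : s = s0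
    · subst h1
      rw [if_pos (by omega), if_neg (by omega), if_pos rfl, one_mul]
    · have hv : (s : ℕ) ≠ (s0 : ℕ) := fun h => h1 (Fin.ext h)
      by_cases h3 : (s : ℕ) + 1 < t0
      · rw [if_pos (by omega), if_pos h3, if_neg h1, mul_one]
      · rw [if_neg (by omega), if_neg h3, if_neg h1, mul_one]
  rw [Finset.prod_congr rfl fun s _ => key s, Finset.prod_mul_distrib,
    Finset.prod_ite_eq' Finset.univ s0 (fun s => δ (ω s))]
  simp

lemma spliceB_low (T N : ℕ) (t : ℕ) (ω ω' : Fin (T-1) → Fin N) (s : Fin (T-1))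
    (h : (s : ℕ) + 1 < t) : spliceB T N t ω ω' s = ω s := if_pos h

lemma spliceB_high (T N : ℕ) (t : ℕ) (ω ω' : Fin (T-1) → Fin N) (s : Fin (T-1))
    (h : ¬ ((s : ℕ) + 1 < t)) : spliceB T N t ω ω' s = ω' s := if_neg h

lemma eulerB (T N : ℕ) (hT : 3 ≤ T)
    (R I : ℝ) (hR : 1 ≤ R)
    (D : Set ℝ) (φ φ' : ℝ → ℝ)
    (hφder : ∀ x ∈ interior D, HasDerivAt φ (φ' x) x)
    (δ : Fin N → ℝ) (hδpos : ∀ n, 0 < δ n)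
    (p : Fin N → ℝ) (hp : ∀ n, 0 < p n) (hp1 : ∑ n, p n = 1)
    (vB : PolicyB T N)
    (hBfeas : FeasBD T N p φ R I D vB)
    (hBmax : ∀ Q : PolicyB T N, FeasBD T N p φ R I D Q →
      objBpol T N δ p Q ≤ objBpol T N δ p vB)
    (hBint : ∀ t ∈ Finset.Icc 1 T, ∀ ω, vB.v t ω ∈ interior D)
    (t0 : ℕ) (h2 : 2 ≤ t0) (hT1 : t0 ≤ T - 1) (ω0 : Fin (T-1) → Fin N) :
    EpathB T N p (fun ω' => φ' (vB.v (t0 + 1) (spliceB T N t0 ω0 ω'))) =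
      R * (∑ n, p n * δ n) *
        EpathB T N p (fun ω' => φ' (vB.v t0 (spliceB T N t0 ω0 ω'))) := by
  classical
  have hRpos : (0:ℝ) < R := by linarith
  set δb : ℝ := ∑ n, p n * δ n with hδb
  have hδbpos : 0 < δb := by
    rw [hδb]
    have hne : (Finset.univ : Finset (Fin N)).Nonempty := by
      by_contra h
      rw [Finset.not_nonempty_iff_eq_empty] at h
      rw [h] at hp1
      simp at hp1
    exact Finset.sum_pos (fun n _ => mul_pos (hp n) (hδpos n)) hne
  set s0 : Fin (T-1) := ⟨t0-1, by omega⟩ with hs0def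
  have hs0 : (s0 : ℕ) + 1 = t0 := by simp [hs0def]; omega
  set pref : (Fin (T-1) → Fin N) → Prop :=
    fun ω => ∀ s : Fin (T-1), (s : ℕ) + 1 < t0 → ω s = ω0 s with hprefdef
  set χ : (Fin (T-1) → Fin N) → ℝ := fun ω => if pref ω then 1 else 0 with hχdef
  set d : ℕ → (Fin (T-1) → Fin N) → ℝ :=
    fun t ω => χ ω * (if t = t0 then 1 else if t = t0 + 1 then -1/δb else 0) with hddef
  have hχcongr : ∀ ω ω' : Fin (T-1) → Fin N,
      (∀ s : Fin (T-1), (s : ℕ) + 1 < t0 → ω s = ω' s) → χ ω = χ ω' := by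
    intro ω ω' hag
    rw [hχdef]
    dsimp only
    congr 1
    rw [eq_iff_iff, hprefdef]
    constructor
    · intro h s hs
      rw [← hag s hs]
      exact h s hs
    · intro h s hs
      rw [hag s hs]
      exact h s hs
  have hχ_ne_s0 : ∀ ω ω' : Fin (T-1) → Fin N,
      (∀ s : Fin (T-1), s ≠ s0 → ω s = ω' s) → χ ω = χ ω' := by
    intro ω ω' hag
    apply hχcongr
    intro s hs
    apply hag
    intro h
    rw [h] at hs
    omega
  have hB0 : wsum (T-1) N p (fun ω => 1 - δ (ω s0) / δb) = 0 := by
    rw [wsum_marginal hp1 s0 (fun n => 1 - δ n / δb)]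
    have : ∀ n : Fin N, p n * (1 - δ n / δb) = p n - (p n * δ n) / δb := by
      intro n
      field_simp
    rw [Finset.sum_congr rfl fun n _ => this n, Finset.sum_sub_distrib, ← Finset.sum_div,
      ← hδb, hp1, div_self (ne_of_gt hδbpos)]
    ring
  have hdad : ∀ t : ℕ, t ≤ T - 1 → ∀ ω ω' : Fin (T-1) → Fin N,
      (∀ s : Fin (T-1), (s : ℕ) < t → ω s = ω' s) → d t ω = d t ω' := by
    intro t ht ω ω' hag
    rcases eq_or_ne t t0 with rfl | h1
    · show χ ω * _ = χ ω' * _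
      rw [hχcongr ω ω' (fun s hs => hag s (by omega))]
    rcases eq_or_ne t (t0+1) with rfl | hb
    · show χ ω * _ = χ ω' * _
      rw [hχcongr ω ω' (fun s hs => hag s (by omega))]
    · show χ ω * _ = χ ω' * _
      rw [if_neg h1, if_neg hb, mul_zero, mul_zero]
  have hobj0 : wsum (T-1) N p (fun ω =>
      ∑ t ∈ Finset.Icc 1 T, discBpol T N δ t ω * d t ω) = 0 := by
    have hint : ∀ ω : Fin (T-1) → Fin N,
        (∑ t ∈ Finset.Icc 1 T, discBpol T N δ t ω * d t ω)
        = (χ ω * discBpol T N δ t0 ω) * (1 - δ (ω s0) / δb) := by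
      intro ω
      have h1 : ∀ t ∈ Finset.Icc 1 T, discBpol T N δ t ω * d t ω
          = (χ ω * discBpol T N δ t ω)
            * (if t = t0 then 1 else if t = t0+1 then -1/δb else 0) := by
        intro t _
        rw [hddef]
        ring
      rw [Finset.sum_congr rfl h1, sum_two' _ t0 (t0+1) (by omega) _ 1 (-1/δb),
        if_pos (by simp only [Finset.mem_Icc]; omega),
        if_pos (by simp only [Finset.mem_Icc]; omega),
        discB_succ T N δ t0 s0 hs0]
      ring
    rw [wsum_congr hint]
    rw [wsum_factor hp1 (fun s => s ≠ s0)
      (fun ω => χ ω * discBpol T N δ t0 ω) (fun ω => 1 - δ (ω s0) / δb) ?_ ?_]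
    · rw [hB0, mul_zero]
    · intro ω1 ω2 hag
      have e1 : χ ω1 = χ ω2 := hχ_ne_s0 _ _ hag
      have e2 : discBpol T N δ t0 ω1 = discBpol T N δ t0 ω2 := by
        apply discB_congr
        intro s hlt2
        apply hag
        intro h
        rw [h] at hlt2
        omega
      rw [e1, e2]
    · intro ω1 ω2 hag
      rw [hag s0 (by simp)]
  have hfoc := focB T N hT δ p hp1 φ φ' R I D hφder vB hBfeas hBmax hBint d hdad hobj0
  set g : ℕ → ℝ := fun t => ∑ ω : Fin (T-1) → Fin N,
    (∏ s, p (ω s)) * (χ ω * φ' (vB.v t ω)) with hgdef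
  have hterm : ∀ t ∈ Finset.Icc 1 T,
      (∑ ω : Fin (T-1) → Fin N, (∏ s, p (ω s)) * (φ' (vB.v t ω) * d t ω)) / R ^ (t-1)
      = (g t / R ^ (t-1)) * (if t = t0 then 1 else if t = t0+1 then -1/δb else 0) := by
    intro t _
    have hnum : (∑ ω : Fin (T-1) → Fin N, (∏ s, p (ω s)) * (φ' (vB.v t ω) * d t ω))
        = g t * (if t = t0 then 1 else if t = t0+1 then -1/δb else 0) := by
      rw [hgdef]
      dsimp only
      rw [Finset.sum_mul]
      apply Finset.sum_congr rfl
      intro ω _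
      rw [hddef]
      ring
    rw [hnum]
    ring
  rw [Finset.sum_congr rfl hterm, sum_two' _ t0 (t0+1) (by omega) _ 1 (-1/δb),
    if_pos (by simp only [Finset.mem_Icc]; omega),
    if_pos (by simp only [Finset.mem_Icc]; omega)] at hfoc
  set π0 : ℝ := wsum (T-1) N p χ with hπ0def
  have hπ0pos : 0 < π0 := by
    rw [hπ0def]
    unfold wsum
    apply Finset.sum_pos'
    · intro ω _
      apply mul_nonneg (Finset.prod_nonneg fun s _ => (hp _).le)
      rw [hχdef]
      dsimp only
      split_ifs <;> norm_num
    · refine ⟨ω0, Finset.mem_univ _, ?_⟩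
      have hχω0 : χ ω0 = 1 := by
        rw [hχdef]
        dsimp only
        rw [if_pos (fun s _ => rfl)]
      rw [hχω0, mul_one]
      exact Finset.prod_pos fun s _ => hp _
  have hconv : ∀ t : ℕ, g t
      = π0 * wsum (T-1) N p (fun ω' => φ' (vB.v t (spliceB T N t0 ω0 ω'))) := by
    intro t
    have step1 : ∀ ω : Fin (T-1) → Fin N,
        χ ω * φ' (vB.v t ω) = χ ω * φ' (vB.v t (spliceB T N t0 ω0 ω)) := by
      intro ω
      by_cases hpω : pref ω
      · have hspl : spliceB T N t0 ω0 ω = ω := by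
          funext s
          unfold spliceB
          by_cases hs : (s : ℕ) + 1 < t0
          · rw [if_pos hs, hpω s hs]
          · rw [if_neg hs]
        rw [hspl]
      · have : χ ω = 0 := by
          rw [hχdef]
          dsimp only
          rw [if_neg hpω]
        rw [this, zero_mul, zero_mul]
    have hgw : g t = wsum (T-1) N p (fun ω => χ ω * φ' (vB.v t ω)) := rfl
    rw [hgw, wsum_congr step1]
    rw [wsum_factor hp1 (fun s => (s : ℕ) + 1 < t0) χ
      (fun ω => φ' (vB.v t (spliceB T N t0 ω0 ω))) ?_ ?_]
    · intro ω1 ω2 hag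
      exact hχcongr ω1 ω2 hag
    · intro ω1 ω2 hag
      have hspl : spliceB T N t0 ω0 ω1 = spliceB T N t0 ω0 ω2 := by
        funext s
        unfold spliceB
        by_cases hs : (s : ℕ) + 1 < t0
        · rw [if_pos hs, if_pos hs]
        · rw [if_neg hs, if_neg hs]
          exact hag s hs
      rw [hspl]
  rw [hconv t0, hconv (t0+1), Nat.add_sub_cancel] at hfoc
  rw [EpathB_eq_wsum, EpathB_eq_wsum]
  set X : ℝ := wsum (T-1) N p (fun ω' => φ' (vB.v t0 (spliceB T N t0 ω0 ω'))) with hX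
  set Y : ℝ := wsum (T-1) N p (fun ω' => φ' (vB.v (t0+1) (spliceB T N t0 ω0 ω'))) with hY
  have hπ : π0 ≠ 0 := ne_of_gt hπ0pos
  have hRne : R ≠ 0 := ne_of_gt hRpos
  have hRt0 : (R : ℝ) ^ (t0-1) ≠ 0 := pow_ne_zero _ hRne
  have hδbne : δb ≠ 0 := ne_of_gt hδbpos
  have hRt : R ^ t0 = R ^ (t0-1) * R := by
    rw [← pow_succ]
    congr 1
    omega
  rw [hRt] at hfoc
  field_simp at hfoc
  have h1 : (π0 * R ^ (t0-1)) * Y = (π0 * R ^ (t0-1)) * (R * δb * X) := by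
    linear_combination (-R ^ (t0-1)) * hfoc
  exact mul_left_cancel₀ (mul_ne_zero hπ hRt0) h1

lemma eulerB1 (T N : ℕ) (hT : 3 ≤ T)
    (R I : ℝ) (hR : 1 ≤ R)
    (D : Set ℝ) (φ φ' : ℝ → ℝ)
    (hφder : ∀ x ∈ interior D, HasDerivAt φ (φ' x) x)
    (δ : Fin N → ℝ) (hδpos : ∀ n, 0 < δ n)
    (p : Fin N → ℝ) (hp : ∀ n, 0 < p n) (hp1 : ∑ n, p n = 1)
    (n1 : Fin N) (vB : PolicyB T N)
    (hBfeas : FeasBD T N p φ R I D vB)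
    (hBmax : ∀ Q : PolicyB T N, FeasBD T N p φ R I D Q →
      objBpol T N δ p Q ≤ objBpol T N δ p vB)
    (hBint : ∀ t ∈ Finset.Icc 1 T, ∀ ω, vB.v t ω ∈ interior D)
    (ω0 : Fin (T-1) → Fin N) (hω0 : ∀ s : Fin (T-1), (s : ℕ) = 0 → ω0 s = n1) :
    EpathB T N p (fun ω' => φ' (vB.v 2 (spliceB T N 2 ω0 ω'))) =
      R * δ n1 * φ' (vB.v 1 ω0) := by
  classical
  have hRpos : (0:ℝ) < R := by linarith
  have hδn1 : δ n1 ≠ 0 := ne_of_gt (hδpos n1)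
  set sh : Fin (T-1) := ⟨0, by omega⟩ with hshdef
  have hshv : (sh : ℕ) = 0 := rfl
  have hsh0 : ω0 sh = n1 := hω0 sh rfl
  set pref : (Fin (T-1) → Fin N) → Prop :=
    fun ω => ∀ s : Fin (T-1), (s : ℕ) + 1 < 2 → ω s = ω0 s with hprefdef
  set χ : (Fin (T-1) → Fin N) → ℝ := fun ω => if pref ω then 1 else 0 with hχdef
  set d : ℕ → (Fin (T-1) → Fin N) → ℝ :=
    fun t ω => χ ω * (if t = 1 then 1 else if t = 2 then -1/δ n1 else 0) with hddef
  have hχcongr : ∀ ω ω' : Fin (T-1) → Fin N,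
      (∀ s : Fin (T-1), (s : ℕ) + 1 < 2 → ω s = ω' s) → χ ω = χ ω' := by
    intro ω ω' hag
    rw [hχdef]
    dsimp only
    congr 1
    rw [eq_iff_iff, hprefdef]
    constructor
    · intro h s hs
      rw [← hag s hs]
      exact h s hs
    · intro h s hs
      rw [hag s hs]
      exact h s hs
  have hdad : ∀ t : ℕ, t ≤ T - 1 → ∀ ω ω' : Fin (T-1) → Fin N,
      (∀ s : Fin (T-1), (s : ℕ) < t → ω s = ω' s) → d t ω = d t ω' := by
    intro t ht ω ω' hag
    rcases eq_or_ne t 1 with rfl | h1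
    · show χ ω * _ = χ ω' * _
      rw [hχcongr ω ω' (fun s hs => hag s (by omega))]
    rcases eq_or_ne t 2 with rfl | hb
    · show χ ω * _ = χ ω' * _
      rw [hχcongr ω ω' (fun s hs => hag s (by omega))]
    · show χ ω * _ = χ ω' * _
      rw [if_neg h1, if_neg hb, mul_zero, mul_zero]
  have hdiscB2 : ∀ ω : Fin (T-1) → Fin N, discBpol T N δ 2 ω = δ (ω sh) := by
    intro ω
    unfold discBpol
    have key : ∀ s : Fin (T-1), (if (s : ℕ) + 1 < 2 then δ (ω s) else 1)
        = (if s = sh then δ (ω s) else 1) := by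
      intro s
      by_cases h1 : s = sh
      · subst h1
        rw [if_pos (by omega), if_pos rfl]
      · have hv : (s : ℕ) ≠ (sh : ℕ) := fun h => h1 (Fin.ext h)
        have hv0 : (sh : ℕ) = 0 := rfl
        rw [if_neg (by omega), if_neg h1]
    rw [Finset.prod_congr rfl fun s _ => key s,
      Finset.prod_ite_eq' Finset.univ sh (fun s => δ (ω s))]
    simp
  have hobj0 : wsum (T-1) N p (fun ω =>
      ∑ t ∈ Finset.Icc 1 T, discBpol T N δ t ω * d t ω) = 0 := by
    have hint : ∀ ω : Fin (T-1) → Fin N,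
        (∑ t ∈ Finset.Icc 1 T, discBpol T N δ t ω * d t ω) = 0 := by
      intro ω
      have h1 : ∀ t ∈ Finset.Icc 1 T, discBpol T N δ t ω * d t ω
          = (χ ω * discBpol T N δ t ω)
            * (if t = 1 then 1 else if t = 2 then -1/δ n1 else 0) := by
        intro t _
        rw [hddef]
        ring
      rw [Finset.sum_congr rfl h1, sum_two' _ 1 2 (by omega) _ 1 (-1/δ n1),
        if_pos (by simp only [Finset.mem_Icc]; omega),
        if_pos (by simp only [Finset.mem_Icc]; omega),
        discB_one, hdiscB2]
      by_cases hpω : pref ω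
      · have hχ1 : χ ω = 1 := by
          rw [hχdef]
          dsimp only
          rw [if_pos hpω]
        have hωsh : ω sh = n1 := by
          rw [hpω sh (by omega), hsh0]
        rw [hχ1, hωsh]
        field_simp
        ring
      · have hχ0 : χ ω = 0 := by
          rw [hχdef]
          dsimp only
          rw [if_neg hpω]
        rw [hχ0]
        ring
    rw [wsum_congr hint, wsum_const hp1]
  have hfoc := focB T N hT δ p hp1 φ φ' R I D hφder vB hBfeas hBmax hBint d hdad hobj0
  set g : ℕ → ℝ := fun t => ∑ ω : Fin (T-1) → Fin N,
    (∏ s, p (ω s)) * (χ ω * φ' (vB.v t ω)) with hgdef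
  have hterm : ∀ t ∈ Finset.Icc 1 T,
      (∑ ω : Fin (T-1) → Fin N, (∏ s, p (ω s)) * (φ' (vB.v t ω) * d t ω)) / R ^ (t-1)
      = (g t / R ^ (t-1)) * (if t = 1 then 1 else if t = 2 then -1/δ n1 else 0) := by
    intro t _
    have hnum : (∑ ω : Fin (T-1) → Fin N, (∏ s, p (ω s)) * (φ' (vB.v t ω) * d t ω))
        = g t * (if t = 1 then 1 else if t = 2 then -1/δ n1 else 0) := by
      rw [hgdef]
      dsimp only
      rw [Finset.sum_mul]
      apply Finset.sum_congr rfl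
      intro ω _
      rw [hddef]
      ring
    rw [hnum]
    ring
  rw [Finset.sum_congr rfl hterm, sum_two' _ 1 2 (by omega) _ 1 (-1/δ n1),
    if_pos (by simp only [Finset.mem_Icc]; omega),
    if_pos (by simp only [Finset.mem_Icc]; omega)] at hfoc
  set π0 : ℝ := wsum (T-1) N p χ with hπ0def
  have hπ0pos : 0 < π0 := by
    rw [hπ0def]
    unfold wsum
    apply Finset.sum_pos'
    · intro ω _
      apply mul_nonneg (Finset.prod_nonneg fun s _ => (hp _).le)
      rw [hχdef]
      dsimp only
      split_ifs <;> norm_num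
    · refine ⟨ω0, Finset.mem_univ _, ?_⟩
      have hχω0 : χ ω0 = 1 := by
        rw [hχdef]
        dsimp only
        rw [if_pos (fun s _ => rfl)]
      rw [hχω0, mul_one]
      exact Finset.prod_pos fun s _ => hp _
  -- g 1 = π0 * φ' (vB.v 1 ω0)
  have hg1 : g 1 = π0 * φ' (vB.v 1 ω0) := by
    have step1 : ∀ ω : Fin (T-1) → Fin N,
        χ ω * φ' (vB.v 1 ω) = φ' (vB.v 1 ω0) * χ ω := by
      intro ω
      by_cases hpω : pref ω
      · have : vB.v 1 ω = vB.v 1 ω0 := by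
          apply vB.adapted 1 (by omega)
          intro s hs
          exact hpω s (by omega)
        rw [this]
        ring
      · have : χ ω = 0 := by
          rw [hχdef]
          dsimp only
          rw [if_neg hpω]
        rw [this]
        ring
    have hgw : g 1 = wsum (T-1) N p (fun ω => χ ω * φ' (vB.v 1 ω)) := rfl
    rw [hgw, wsum_congr step1, wsum_mul]
    rw [← hπ0def]
    ring
  -- g 2 = π0 * (spliced expectation)
  have hg2 : g 2
      = π0 * wsum (T-1) N p (fun ω' => φ' (vB.v 2 (spliceB T N 2 ω0 ω'))) := by
    have step1 : ∀ ω : Fin (T-1) → Fin N,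
        χ ω * φ' (vB.v 2 ω) = χ ω * φ' (vB.v 2 (spliceB T N 2 ω0 ω)) := by
      intro ω
      by_cases hpω : pref ω
      · have hspl : spliceB T N 2 ω0 ω = ω := by
          funext s
          unfold spliceB
          by_cases hs : (s : ℕ) + 1 < 2
          · rw [if_pos hs, hpω s hs]
          · rw [if_neg hs]
        rw [hspl]
      · have : χ ω = 0 := by
          rw [hχdef]
          dsimp only
          rw [if_neg hpω]
        rw [this, zero_mul, zero_mul]
    have hgw : g 2 = wsum (T-1) N p (fun ω => χ ω * φ' (vB.v 2 ω)) := rfl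
    rw [hgw, wsum_congr step1]
    rw [wsum_factor hp1 (fun s => (s : ℕ) + 1 < 2) χ
      (fun ω => φ' (vB.v 2 (spliceB T N 2 ω0 ω))) ?_ ?_]
    · intro ω1 ω2 hag
      exact hχcongr ω1 ω2 hag
    · intro ω1 ω2 hag
      have hspl : spliceB T N 2 ω0 ω1 = spliceB T N 2 ω0 ω2 := by
        funext s
        unfold spliceB
        by_cases hs : (s : ℕ) + 1 < 2
        · rw [if_pos hs, if_pos hs]
        · rw [if_neg hs, if_neg hs]
          exact hag s hs
      rw [hspl]
  rw [hg1, hg2] at hfoc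
  norm_num at hfoc
  rw [EpathB_eq_wsum]
  set Y : ℝ := wsum (T-1) N p (fun ω' => φ' (vB.v 2 (spliceB T N 2 ω0 ω'))) with hY
  have hπ : π0 ≠ 0 := ne_of_gt hπ0pos
  have hRne : R ≠ 0 := ne_of_gt hRpos
  field_simp at hfoc
  have h1 : π0 * Y = π0 * (R * δ n1 * φ' (vB.v 1 ω0)) := by
    linear_combination -hfoc
  exact mul_left_cancel₀ hπ h1
/-- Proposition (inverse Euler equations).  Let `vE` be a maximizer of
Problem IV (for fixed initial type `δ^(n1)`) and `vB` a maximizer of the efficient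
problem, both interior.  Then for every `t ∈ {2,…,T-1}` and every history:
`E_F[φ'(v^E_{t+1})] = R (Σ q δ) E_F[φ'(v^E_t)]` and
`E_F[φ'(v^B_{t+1}(δ₁,H,·))] = R (Σ p δ) E_F[φ'(v^B_t(δ₁,H,·))]`, together with the
date-1 versions `E_F[φ'(v^E_2)] = R δ₁ φ'(v^E_1)` and
`E_F[φ'(v^B_2(δ₁,·))] = R δ₁ φ'(v^B_1(δ₁))`. -/
theorem stmt13
    (T N : ℕ) (hT : 3 ≤ T) (hN : 2 ≤ N)
    (R I : ℝ) (hR : 1 ≤ R) (hI : 0 < I)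
    (D : Set ℝ) (hD : D.OrdConnected)
    (φ φ' : ℝ → ℝ)
    (hφm : StrictMonoOn φ D)
    (hφconv : StrictConvexOn ℝ D φ)
    (hφder : ∀ x ∈ interior D, HasDerivAt φ (φ' x) x)
    (δ : Fin N → ℝ) (hδpos : ∀ n, 0 < δ n) (hδmono : StrictMono δ)
    (p q : Fin N → ℝ) (hp : ∀ n, 0 < p n) (hq : ∀ n, 0 < q n)
    (hp1 : ∑ n, p n = 1) (hq1 : ∑ n, q n = 1)
    (hFOSD : ∀ k : ℕ,
      ∑ n ∈ Finset.univ.filter (fun n : Fin N => (n : ℕ) < k), q n ≤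
        ∑ n ∈ Finset.univ.filter (fun n : Fin N => (n : ℕ) < k), p n)
    (n1 : Fin N)
    -- vE is an interior maximizer of Problem IV for initial type δ n1
    (vE : PolicyIV T N)
    (hEfeas : FeasIVD T N δ p q φ R I D vE)
    (hEmax : ∀ Q : PolicyIV T N, FeasIVD T N δ p q φ R I D Q →
      payoffIV T N δ q (δ n1) Q ≤ payoffIV T N δ q (δ n1) vE)
    (hEint : ∀ t ∈ Finset.Icc 1 T, ∀ ω, vE.v t ω ∈ interior D)
    -- vB is an interior maximizer of the efficient problem
    (vB : PolicyB T N)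
    (hBfeas : FeasBD T N p φ R I D vB)
    (hBmax : ∀ Q : PolicyB T N, FeasBD T N p φ R I D Q →
      objBpol T N δ p Q ≤ objBpol T N δ p vB)
    (hBint : ∀ t ∈ Finset.Icc 1 T, ∀ ω, vB.v t ω ∈ interior D) :
    -- inverse Euler equation for the equilibrium policy
    (∀ t : ℕ, 2 ≤ t → t ≤ T - 1 → ∀ ω : Fin (T - 2) → Fin N,
      Epath T N p (fun ω' => φ' (vE.v (t + 1) (splice T N (t - 1) ω ω'))) =
        R * (∑ n, q n * δ n) *
          Epath T N p (fun ω' => φ' (vE.v t (splice T N (t - 1) ω ω')))) ∧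
    -- inverse Euler equation for the efficient policy (initial type δ n1)
    (∀ t : ℕ, 2 ≤ t → t ≤ T - 1 → ∀ ω : Fin (T - 1) → Fin N,
      (∀ s : Fin (T - 1), (s : ℕ) = 0 → ω s = n1) →
      EpathB T N p (fun ω' => φ' (vB.v (t + 1) (spliceB T N t ω ω'))) =
        R * (∑ n, p n * δ n) *
          EpathB T N p (fun ω' => φ' (vB.v t (spliceB T N t ω ω')))) ∧
    -- date-1 condition for the equilibrium policy
    (∀ ω : Fin (T - 2) → Fin N,
      Epath T N p (fun ω' => φ' (vE.v 2 ω')) = R * δ n1 * φ' (vE.v 1 ω)) ∧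
    -- date-1 condition for the efficient policy
    (∀ ω : Fin (T - 1) → Fin N, (∀ s : Fin (T - 1), (s : ℕ) = 0 → ω s = n1) →
      EpathB T N p (fun ω' => φ' (vB.v 2 (spliceB T N 2 ω ω'))) =
        R * δ n1 * φ' (vB.v 1 ω)) := by
  refine ⟨?_, ?_, ?_, ?_⟩
  · intro t ht2 htT ω
    exact eulerIV T N hT R I hR D φ φ' hφder δ hδpos p q hp hq hp1 hq1 (δ n1) vE
      hEfeas hEmax hEint t ht2 htT ω
  · intro t ht2 htT ω _
    exact eulerB T N hT R I hR D φ φ' hφder δ hδpos p hp hp1 vB hBfeas hBmax hBint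
      t ht2 htT ω
  · intro ω
    exact eulerIV1 T N hT R I hR D φ φ' hφder δ hδpos p q hp hq hp1 hq1 n1 vE
      hEfeas hEmax hEint ω
  · intro ω hω
    exact eulerB1 T N hT R I hR D φ φ' hφder δ hδpos p hp hp1 n1 vB hBfeas hBmax hBint ω hω
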